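/- arXiv:1709.10227 — 3 statements merged into one kernel-verified Lean document; each statement's English description precedes it below -/
import Mathlib

section
/- Let f be a proper generalized polyhedral convex function with f(x) = max{⟨v_k*, x⟩ + β_k : k = 1,…,m} on dom f, and let x ∈ dom f. Then the directional derivative of f at x satisfies: f′(x; h) = max{⟨v_k*, h⟩ : k ∈ Θ(x)} if h ∈ cone(dom f − x), and f′(x; h) = +∞ if h ∉ cone(dom f − x), where Θ(x) = {k ∈ {1,…,m} : ⟨v_k*, x⟩ + β_k = f(x)}. -/
open scoped Pointwise

/-- A generalized polyhedral convex set: the intersection of a closed affine subspace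
with finitely many closed half-spaces. -/
def IsGPCS {X : Type*} [AddCommGroup X] [Module ℝ X] [TopologicalSpace X] (S : Set X) : Prop :=
  ∃ (p : ℕ) (xs : Fin p → X →L[ℝ] ℝ) (α : Fin p → ℝ) (L : AffineSubspace ℝ X),
    IsClosed (L : Set X) ∧ S = {x | x ∈ L ∧ ∀ i, xs i x ≤ α i}

/-- The convex cone generated by a set (all finite nonnegative combinations, including `0`). -/
def coneGen {E : Type*} [AddCommGroup E] [Module ℝ E] (s : Set E) : Set E :=
  {y | ∃ (n : ℕ) (c : Fin n → ℝ) (w : Fin n → E),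
    (∀ i, 0 ≤ c i) ∧ (∀ i, w i ∈ s) ∧ y = ∑ i, c i • w i}

/-- **Directional derivative formula.**  Let `f` be a proper generalized polyhedral convex
function, `f = max {⟨vₖ, ·⟩ + βₖ}` on its nonempty generalized polyhedral convex domain,
`+∞` elsewhere, and let `x ∈ dom f`.  Then the directional derivative
`f′(x; h) = inf_{t > 0} (f(x + t h) − f(x)) / t` equals `max {⟨vₖ, h⟩ : k ∈ Θ(x)}` if
`h ∈ cone (dom f − x)`, and equals `+∞` otherwise, where
`Θ(x) = {k | ⟨vₖ, x⟩ + βₖ = f(x)}`. -/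
theorem directional_derivative_of_gpcf
    {X : Type*}
    [AddCommGroup X] [Module ℝ X] [TopologicalSpace X] [IsTopologicalAddGroup X]
    [ContinuousSMul ℝ X] [LocallyConvexSpace ℝ X] [T2Space X]
    (domf : Set X) (hdomf : IsGPCS domf) (hdomne : domf.Nonempty)
    (m : ℕ) (v : Fin (m + 1) → X →L[ℝ] ℝ) (β : Fin (m + 1) → ℝ)
    (f : X → EReal)
    (hf : ∀ x ∈ domf,
      f x = ((Finset.univ.sup' Finset.univ_nonempty fun k => v k x + β k : ℝ) : EReal))
    (hf' : ∀ x ∉ domf, f x = ⊤)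
    (x : X) (hx : x ∈ domf)
    (fdir : X → EReal)
    (hfdir : ∀ h : X, fdir h =
      ⨅ t : {t : ℝ // 0 < t}, (((t : ℝ)⁻¹ : ℝ) : EReal) * (f (x + (t : ℝ) • h) - f x)) :
    ∀ h : X,
      (h ∈ coneGen (domf - {x}) →
        fdir h = ⨆ k ∈ {k : Fin (m + 1) | ((v k x + β k : ℝ) : EReal) = f x},
          ((v k h : ℝ) : EReal)) ∧
      (h ∉ coneGen (domf - {x}) → fdir h = ⊤) := by
  classical
  obtain ⟨p, xs, α, L, hLc, hSeq⟩ := hdomf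
  set g : X → ℝ := fun y => Finset.univ.sup' Finset.univ_nonempty fun k => v k y + β k with hgdef
  have hfg : ∀ y ∈ domf, f y = ((g y : ℝ) : EReal) := hf
  have hfx : f x = ((g x : ℝ) : EReal) := hfg x hx
  have hle_g : ∀ (y : X) (k : Fin (m+1)), v k y + β k ≤ g y := fun y k =>
    Finset.le_sup' (fun k => v k y + β k) (Finset.mem_univ k)
  set Θfin : Finset (Fin (m+1)) := Finset.univ.filter (fun k => v k x + β k = g x) with hΘdef
  have hΘne : Θfin.Nonempty := by
    obtain ⟨k, -, hk⟩ := Finset.exists_mem_eq_sup' (Finset.univ_nonempty)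
      (fun k => v k x + β k)
    exact ⟨k, Finset.mem_filter.mpr ⟨Finset.mem_univ k, hk.symm⟩⟩
  have hxL : x ∈ L ∧ ∀ i, xs i x ≤ α i := by rw [hSeq] at hx; exact hx
  intro h
  constructor
  · -- h in the cone
    intro hh
    obtain ⟨n, c, w, hc, hwmem, hsum⟩ := hh
    set M : ℝ := Θfin.sup' hΘne (fun k => v k h) with hMdef
    obtain ⟨kstar, hkmem, hkeq⟩ := Finset.exists_mem_eq_sup' hΘne (fun k => v k h)
    have hkact : v kstar x + β kstar = g x := (Finset.mem_filter.mp hkmem).2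
    -- choose representatives u j ∈ domf with w j = u j - x
    have hexu : ∀ j, ∃ u, u ∈ domf ∧ u - x = w j := by
      intro j
      rcases Set.mem_sub.mp (hwmem j) with ⟨a, ha, b, hb, hab⟩
      rcases Set.mem_singleton_iff.mp hb with rfl
      exact ⟨a, ha, hab⟩
    choose u hu huw using hexu
    have huL : ∀ j, u j ∈ L ∧ ∀ i, xs i (u j) ≤ α i := by
      intro j; have := hu j; rw [hSeq] at this; exact this
    -- key: x + t h stays in L
    have hhdir : h ∈ L.direction := by
      rw [hsum]
      refine Submodule.sum_mem _ fun j _ => Submodule.smul_mem _ _ ?_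
      rw [← huw j]
      simpa using AffineSubspace.vsub_mem_direction (huL j).1 hxL.1
    have hdirL : ∀ t : ℝ, x + t • h ∈ L := by
      intro t
      have := AffineSubspace.vadd_mem_of_mem_direction
        (Submodule.smul_mem _ t hhdir) hxL.1
      simpa [add_comm] using this
    -- active constraints give xs i h ≤ 0
    have hneg : ∀ i, xs i x = α i → xs i h ≤ 0 := by
      intro i hi
      have hsplit : xs i h = ∑ j, c j * (xs i (u j) - α i) := by
        rw [hsum, map_sum]
        refine Finset.sum_congr rfl fun j _ => ?_
        rw [← huw j, map_smul, map_sub, hi, smul_eq_mul]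
      rw [hsplit]
      refine Finset.sum_nonpos fun j _ => mul_nonpos_of_nonneg_of_nonpos (hc j) ?_
      linarith [(huL j).2 i]
    -- step length for staying in domf
    set T : Fin p → ℝ := fun i => if 0 < xs i h then (α i - xs i x) / xs i h else 1
      with hTdef
    have hTpos : ∀ i, 0 < T i := by
      intro i
      rw [hTdef]
      by_cases hp : 0 < xs i h
      · simp only [if_pos hp]
        apply div_pos _ hp
        rcases lt_or_eq_of_le (hxL.2 i) with h1 | h1
        · linarith
        · exact absurd (hneg i h1) (not_le.mpr hp)
      · simp [if_neg hp]
    set t₀ : ℝ := (insert (1:ℝ) (Finset.univ.image T)).min' (Finset.insert_nonempty _ _)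
      with ht₀def
    have ht₀pos : 0 < t₀ := by
      rw [ht₀def, Finset.lt_min'_iff]
      intro b hb
      rcases Finset.mem_insert.mp hb with rfl | hb
      · norm_num
      · rcases Finset.mem_image.mp hb with ⟨i, -, rfl⟩
        exact hTpos i
    have ht₀le : ∀ i, t₀ ≤ T i := fun i =>
      Finset.min'_le _ _ (Finset.mem_insert.mpr (Or.inr (Finset.mem_image_of_mem T
        (Finset.mem_univ i))))
    have hdom : ∀ t : ℝ, 0 < t → t ≤ t₀ → x + t • h ∈ domf := by
      intro t ht ht'
      rw [hSeq]
      refine ⟨hdirL t, fun i => ?_⟩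
      have hval : xs i (x + t • h) = xs i x + t * xs i h := by
        simp
      rw [hval]
      by_cases hp : 0 < xs i h
      · have hTi : T i = (α i - xs i x) / xs i h := by rw [hTdef]; simp [if_pos hp]
        have : t ≤ (α i - xs i x) / xs i h := by
          rw [← hTi]; exact le_trans ht' (ht₀le i)
        have := (le_div_iff₀ hp).mp this
        linarith
      · have : t * xs i h ≤ 0 := mul_nonpos_of_nonneg_of_nonpos ht.le (not_lt.mp hp)
        linarith [hxL.2 i]
    -- step length for the max formula
    have hMk : M = v kstar h := hMdef.trans hkeq
    set T2 : Fin (m+1) → ℝ := fun k =>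
      if 0 < v k h - M ∧ v k x + β k ≠ g x
      then (g x - (v k x + β k)) / (v k h - M) else 1 with hT2def
    have hT2eq : ∀ k, T2 k =
        if 0 < v k h - M ∧ v k x + β k ≠ g x
        then (g x - (v k x + β k)) / (v k h - M) else 1 := fun k => rfl
    have hT2pos : ∀ k, 0 < T2 k := by
      intro k
      rw [hT2eq k]
      by_cases hk : 0 < v k h - M ∧ v k x + β k ≠ g x
      · rw [if_pos hk]
        exact div_pos (by rcases lt_or_eq_of_le (hle_g x k) with h1 | h1
                          · linarith
                          · exact absurd h1 hk.2) hk.1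
      · rw [if_neg hk]; norm_num
    set t₁ : ℝ := (insert (1:ℝ) (Finset.univ.image T2)).min' (Finset.insert_nonempty _ _)
      with ht₁def
    have ht₁pos : 0 < t₁ := by
      rw [ht₁def, Finset.lt_min'_iff]
      intro b hb
      rcases Finset.mem_insert.mp hb with rfl | hb
      · norm_num
      · rcases Finset.mem_image.mp hb with ⟨k, -, rfl⟩
        exact hT2pos k
    have ht₁le : ∀ k, t₁ ≤ T2 k := fun k =>
      Finset.min'_le _ _ (Finset.mem_insert.mpr (Or.inr (Finset.mem_image_of_mem T2
        (Finset.mem_univ k))))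
    have hgeq : ∀ t : ℝ, 0 < t → t ≤ t₁ → g (x + t • h) = g x + t * M := by
      intro t ht ht'
      have hform : ∀ k : Fin (m+1), v k (x + t • h) + β k = (v k x + β k) + t * v k h := by
        intro k; simp; ring
      apply le_antisymm
      · apply Finset.sup'_le
        intro k _
        rw [hform k]
        by_cases hk : v k x + β k = g x
        · have hmem : k ∈ Θfin := Finset.mem_filter.mpr ⟨Finset.mem_univ k, hk⟩
          have : v k h ≤ M := Finset.le_sup' (fun k => v k h) hmem
          nlinarith
        · by_cases hp : 0 < v k h - M
          · have hT2k : T2 k = (g x - (v k x + β k)) / (v k h - M) := by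
              rw [hT2eq k, if_pos (And.intro hp hk)]
            have : t ≤ (g x - (v k x + β k)) / (v k h - M) := by
              rw [← hT2k]; exact le_trans ht' (ht₁le k)
            have := (le_div_iff₀ hp).mp this
            linarith
          · have h1 : v k x + β k ≤ g x := hle_g x k
            have h2 : v k h ≤ M := by linarith [not_lt.mp hp]
            nlinarith
      · have : v kstar (x + t • h) + β kstar = g x + t * M := by
          rw [hform kstar, hkact, hMk]
        rw [← this]
        exact hle_g _ kstar
    -- lower bound for each difference quotient
    have hlow : ∀ t : {t : ℝ // 0 < t},
        (M : EReal) ≤ (((t : ℝ)⁻¹ : ℝ) : EReal) * (f (x + (t : ℝ) • h) - f x) := by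
      rintro ⟨t, ht⟩
      show (M : EReal) ≤ ((t⁻¹ : ℝ) : EReal) * (f (x + t • h) - f x)
      by_cases hmem : x + t • h ∈ domf
      · rw [hfg _ hmem, hfx]
        rw [← EReal.coe_sub, ← EReal.coe_mul, EReal.coe_le_coe_iff]
        have h1 : g x + t * M ≤ g (x + t • h) := by
          have h0 := hle_g (x + t • h) kstar
          have h2 : v kstar (x + t • h) + β kstar = g x + t * M := by
            simp only [map_add, map_smul, smul_eq_mul]
            rw [hMk]
            linarith [hkact]
          linarith
        have h3 : t * M ≤ g (x + t • h) - g x := by linarith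
        calc M = t⁻¹ * (t * M) := by field_simp
          _ ≤ t⁻¹ * (g (x + t • h) - g x) :=
            mul_le_mul_of_nonneg_left h3 (inv_nonneg.mpr ht.le)
      · rw [hf' _ hmem, hfx, EReal.top_sub_coe,
          EReal.coe_mul_top_of_pos (by exact_mod_cast inv_pos.mpr ht)]
        exact le_top
    -- final value
    have hfdirM : fdir h = (M : EReal) := by
      rw [hfdir h]
      apply le_antisymm
      · have hts : (0:ℝ) < min t₀ t₁ := lt_min ht₀pos ht₁pos
        have key : ((((min t₀ t₁ : ℝ))⁻¹ : ℝ) : EReal) *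
            (f (x + (min t₀ t₁) • h) - f x) = (M : EReal) := by
          have hmem : x + (min t₀ t₁) • h ∈ domf := hdom _ hts (min_le_left _ _)
          rw [hfg _ hmem, hfx, hgeq _ hts (min_le_right _ _)]
          rw [← EReal.coe_sub, ← EReal.coe_mul, EReal.coe_eq_coe_iff]
          rw [add_sub_cancel_left, inv_mul_cancel_left₀ (ne_of_gt hts)]
        exact le_of_le_of_eq (iInf_le _ ⟨min t₀ t₁, hts⟩) key
      · exact le_iInf hlow
    rw [hfdirM]
    -- identify the sup over the active set
    have hset : {k : Fin (m + 1) | ((v k x + β k : ℝ) : EReal) = f x} = ↑Θfin := by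
      ext k
      simp only [Set.mem_setOf_eq, Finset.coe_filter, hfx, EReal.coe_eq_coe_iff,
        Finset.mem_univ, true_and, hΘdef]
    rw [hset]
    apply le_antisymm
    · rw [hMk]
      exact le_iSup₂ (f := fun k (_ : k ∈ (↑Θfin : Set (Fin (m+1)))) => ((v k h : ℝ) : EReal))
        kstar hkmem
    · refine iSup₂_le fun k hk => ?_
      rw [EReal.coe_le_coe_iff]
      exact Finset.le_sup' (fun k => v k h) hk
  · -- h not in the cone
    intro hh
    rw [hfdir h]
    rw [iInf_eq_top]
    rintro ⟨t, ht⟩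
    show ((t⁻¹ : ℝ) : EReal) * (f (x + t • h) - f x) = ⊤
    have hnot : x + t • h ∉ domf := by
      intro hin
      apply hh
      refine ⟨1, fun _ => t⁻¹, fun _ => (x + t • h) - x, fun _ => (inv_pos.mpr ht).le,
        fun _ => Set.sub_mem_sub hin rfl, ?_⟩
      rw [Fin.sum_univ_one, add_sub_cancel_left, smul_smul, inv_mul_cancel₀ (ne_of_gt ht),
        one_smul]
    rw [hf' _ hnot, hfx, EReal.top_sub_coe,
      EReal.coe_mul_top_of_pos (by exact_mod_cast inv_pos.mpr ht)]
end

section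
/- (Optimality condition IV) A vector x ∈ D ∩ dom f is a solution of problem (P) if and only if 0 ∈ conv{v_k* : k ∈ Θ(x)} + cone{x_i* : i ∈ I(x)} + cone{u_j* : j ∈ J(x)} + (ker A ∩ ker B)^⊥, where Θ(x) = {k : ⟨v_k*, x⟩ + β_k = f(x)}, I(x) = {i ∈ {1,…,p} : ⟨x_i*, x⟩ = α_i}, and J(x) = {j ∈ {1,…,q} : ⟨u_j*, x⟩ = γ_j}. -/
open scoped Pointwise

open scoped Pointwise

section coneGenBasics

variable {E : Type*} [AddCommGroup E] [Module ℝ E] {s : Set E}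

lemma mem_coneGen_self {x : E} (hx : x ∈ s) : x ∈ coneGen s :=
  ⟨1, fun _ => 1, fun _ => x, fun _ => zero_le_one, fun _ => hx, by simp⟩

lemma zero_mem_coneGen : (0 : E) ∈ coneGen s :=
  ⟨0, fun i => i.elim0, fun i => i.elim0, fun i => i.elim0, fun i => i.elim0, by simp⟩

lemma add_mem_coneGen {x y : E} (hx : x ∈ coneGen s) (hy : y ∈ coneGen s) :
    x + y ∈ coneGen s := by
  obtain ⟨n, c, w, hc, hw, rfl⟩ := hx
  obtain ⟨n', c', w', hc', hw', rfl⟩ := hy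
  refine ⟨n + n', Fin.append c c', Fin.append w w', ?_, ?_, ?_⟩
  · intro i
    refine Fin.addCases (fun j => ?_) (fun j => ?_) i
    · simp [Fin.append_left, hc j]
    · simp [Fin.append_right, hc' j]
  · intro i
    refine Fin.addCases (fun j => ?_) (fun j => ?_) i
    · simp [Fin.append_left, hw j]
    · simp [Fin.append_right, hw' j]
  · rw [Fin.sum_univ_add]
    simp [Fin.append_left, Fin.append_right]

lemma smul_mem_coneGen {c : ℝ} {x : E} (hc : 0 ≤ c) (hx : x ∈ coneGen s) :
    c • x ∈ coneGen s := by
  obtain ⟨n, cc, w, hcc, hw, rfl⟩ := hx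
  exact ⟨n, fun i => c * cc i, w, fun i => mul_nonneg hc (hcc i), hw, by
    simp [Finset.smul_sum, mul_smul]⟩

lemma sum_mem_coneGen {ι : Type*} (t : Finset ι) (g : ι → E)
    (hg : ∀ i ∈ t, g i ∈ coneGen s) : (∑ i ∈ t, g i) ∈ coneGen s := by
  classical
  induction t using Finset.induction_on with
  | empty => simpa using zero_mem_coneGen
  | @insert a t' hnot ih =>
    rw [Finset.sum_insert hnot]
    exact add_mem_coneGen (hg a (Finset.mem_insert_self a t'))
      (ih fun i hi => hg i (Finset.mem_insert_of_mem hi))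

lemma convex_coneGen : Convex ℝ (coneGen s) := by
  intro x hx y hy a b ha hb _
  exact add_mem_coneGen (smul_mem_coneGen ha hx) (smul_mem_coneGen hb hy)

end coneGenBasics

section Cara

variable {E : Type*} [AddCommGroup E] [Module ℝ E]

/-- Carathéodory-type lemma for cones: any nonnegative combination can be rewritten as a
nonnegative combination over a linearly independent subfamily. -/
lemma caratheodory_cone {ι : Type*} [Fintype ι] (w : ι → E) (t : Finset ι) (c : ι → ℝ)
    (hc : ∀ i, 0 ≤ c i) :
    ∃ t' ⊆ t, LinearIndependent ℝ (fun i : t' => w i) ∧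
      ∃ c' : ι → ℝ, (∀ i, 0 ≤ c' i) ∧ ∑ i ∈ t', c' i • w i = ∑ i ∈ t, c i • w i := by
  classical
  induction t using Finset.strongInduction generalizing c with
  | _ t ih =>
  by_cases hli : LinearIndependent ℝ (fun i : t => w i)
  · exact ⟨t, le_refl t, hli, c, hc, rfl⟩
  · obtain ⟨g, hg0, i₁, hi₁⟩ := Fintype.not_linearIndependent_iff.mp hli
    -- extend g to ι, possibly negated so that some coefficient is positive
    have key : ∀ g : ι → ℝ, (∀ i ∉ t, g i = 0) → (∑ i ∈ t, g i • w i = 0) →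
        (∃ i ∈ t, 0 < g i) →
        ∃ t' ⊆ t, LinearIndependent ℝ (fun i : t' => w i) ∧
          ∃ c' : ι → ℝ, (∀ i, 0 ≤ c' i) ∧ ∑ i ∈ t', c' i • w i = ∑ i ∈ t, c i • w i := by
      intro d hd0 hdsum ⟨ipos, hipos, hdpos⟩
      -- minimize c i / d i over positive d i
      obtain ⟨i₀, hi₀mem, hi₀min⟩ :=
        Finset.exists_min_image (t.filter fun i => 0 < d i) (fun i => c i / d i)
          ⟨ipos, Finset.mem_filter.mpr ⟨hipos, hdpos⟩⟩
      rw [Finset.mem_filter] at hi₀mem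
      obtain ⟨hi₀t, hi₀d⟩ := hi₀mem
      set r : ℝ := c i₀ / d i₀ with hr
      have hr0 : 0 ≤ r := div_nonneg (hc i₀) hi₀d.le
      set c'' : ι → ℝ := fun i => c i - r * d i with hc''
      have hc''0 : ∀ i, 0 ≤ c'' i := by
        intro i
        by_cases hit : i ∈ t
        · by_cases hdi : 0 < d i
          · have := hi₀min i (Finset.mem_filter.mpr ⟨hit, hdi⟩)
            have : r * d i ≤ c i := by
              rw [div_le_div_iff₀ hi₀d hdi] at this
              calc r * d i = (c i₀ / d i₀) * d i := rfl
                _ ≤ c i := by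
                  rw [div_mul_eq_mul_div, div_le_iff₀ hi₀d]
                  linarith [this]
            simpa [hc''] using by linarith
          · have : r * d i ≤ 0 := mul_nonpos_of_nonneg_of_nonpos hr0 (le_of_not_gt hdi)
            have := hc i
            simp only [hc'']
            linarith
        · simp [hc'', hd0 i hit, hc i]
      have hczero : c'' i₀ = 0 := by
        simp [hc'', hr, div_mul_cancel₀ _ (ne_of_gt hi₀d)]
      have hsum : ∑ i ∈ t.erase i₀, c'' i • w i = ∑ i ∈ t, c i • w i := by
        have h1 : ∑ i ∈ t, c'' i • w i = ∑ i ∈ t, c i • w i := by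
          simp only [hc'', sub_smul, mul_smul, Finset.sum_sub_distrib]
          rw [← Finset.smul_sum, hdsum, smul_zero, sub_zero]
        rw [← h1]
        exact Finset.sum_erase _ (by rw [hczero, zero_smul])
      obtain ⟨t', ht'sub, hli', c3, hc3, hsum3⟩ :=
        ih (t.erase i₀) (Finset.erase_ssubset hi₀t) c'' hc''0
      exact ⟨t', ht'sub.trans (Finset.erase_subset _ _), hli', c3, hc3, by rw [hsum3, hsum]⟩
    -- build d from g
    rcases lt_or_gt_of_ne hi₁ with hneg | hpos
    · refine key (fun i => if h : i ∈ t then -g ⟨i, h⟩ else 0) (fun i hi => dif_neg hi) ?_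
        ⟨i₁, i₁.2, by simp [i₁.2]; linarith⟩
      rw [← Finset.sum_attach t (fun i => _ • w i)]
      have hcong : ∀ i ∈ t.attach,
          (if h : (i : ι) ∈ t then -g ⟨i, h⟩ else 0) • w (i : ι) = -(g i • w i) := by
        intro i _
        simp [i.2]
      rw [Finset.sum_congr rfl hcong]
      simp only [Finset.univ_eq_attach] at hg0
      rw [Finset.sum_neg_distrib, hg0, neg_zero]
    · refine key (fun i => if h : i ∈ t then g ⟨i, h⟩ else 0) (fun i hi => dif_neg hi) ?_
        ⟨i₁, i₁.2, by simp [i₁.2]; exact hpos⟩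
      rw [← Finset.sum_attach t (fun i => _ • w i)]
      have hcong : ∀ i ∈ t.attach,
          (if h : (i : ι) ∈ t then g ⟨i, h⟩ else 0) • w (i : ι) = g i • w i := by
        intro i _
        simp [i.2]
      rw [Finset.sum_congr rfl hcong]
      simpa only [Finset.univ_eq_attach] using hg0

end Cara

section Closed

variable {E : Type*} [NormedAddCommGroup E] [NormedSpace ℝ E] [FiniteDimensional ℝ E]
variable {ι : Type*} [Fintype ι]

lemma coneGen_range_mem_iff {E : Type*} [AddCommGroup E] [Module ℝ E] (w : ι → E) (x : E) :
    x ∈ coneGen (Set.range w) ↔ ∃ c : ι → ℝ, (∀ i, 0 ≤ c i) ∧ x = ∑ i, c i • w i := by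
  classical
  constructor
  · rintro ⟨n, c, ws, hc, hws, rfl⟩
    choose σ hσ using hws
    refine ⟨fun j => ∑ i ∈ Finset.univ.filter (fun i => σ i = j), c i,
      fun j => Finset.sum_nonneg fun i _ => hc i, ?_⟩
    have h1 : ∑ i, c i • ws i = ∑ i, c i • w (σ i) := by
      simp only [hσ]
    rw [h1, ← Finset.sum_fiberwise Finset.univ σ (fun i => c i • w (σ i))]
    apply Finset.sum_congr rfl
    intro j _
    rw [Finset.sum_smul]
    apply Finset.sum_congr rfl
    intro i hi
    rw [Finset.mem_filter] at hi
    rw [hi.2]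
  · rintro ⟨c, hc, rfl⟩
    exact sum_mem_coneGen Finset.univ _ fun i _ =>
      smul_mem_coneGen (hc i) (mem_coneGen_self ⟨i, rfl⟩)

lemma isClosed_coneGen_range (w : ι → E) : IsClosed (coneGen (Set.range w)) := by
  classical
  have hunion : coneGen (Set.range w) =
      ⋃ t : {t : Finset ι // LinearIndependent ℝ (fun i : t => w i)},
        (fun c : {i // i ∈ t.1} → ℝ => ∑ i, c i • w i) '' {c | ∀ i, 0 ≤ c i} := by
    ext x
    constructor
    · intro hx
      obtain ⟨c, hc, rfl⟩ := (coneGen_range_mem_iff w x).mp hx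
      obtain ⟨t', ht'sub, hli, c', hc', hsum⟩ :=
        caratheodory_cone w Finset.univ c hc
      rw [Set.mem_iUnion]
      refine ⟨⟨t', hli⟩, ⟨fun i => c' i, fun i => hc' i, ?_⟩⟩
      simp only
      rw [Finset.univ_eq_attach, Finset.sum_attach t' (fun i => c' i • w i), hsum]
    · intro hx
      rw [Set.mem_iUnion] at hx
      obtain ⟨t, c, hc, rfl⟩ := hx
      exact sum_mem_coneGen Finset.univ _ fun i _ =>
        smul_mem_coneGen (hc i) (mem_coneGen_self ⟨i, rfl⟩)
  rw [hunion]
  apply isClosed_iUnion_of_finite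
  rintro ⟨t, hli⟩
  set L : ({i // i ∈ t} → ℝ) →ₗ[ℝ] E := Fintype.linearCombination ℝ (fun i : t => w i)
  have hker : LinearMap.ker L = ⊥ := by
    rw [LinearMap.ker_eq_bot']
    intro c hc
    rw [Fintype.linearCombination_apply] at hc
    exact funext (Fintype.linearIndependent_iff.mp hli c hc)
  have hemb := LinearMap.isClosedEmbedding_of_injective (f := L) hker
  have hcl : IsClosed {c : {i // i ∈ t} → ℝ | ∀ i, 0 ≤ c i} := by
    have h2 : {c : {i // i ∈ t} → ℝ | ∀ i, 0 ≤ c i} = ⋂ i, {c | 0 ≤ c i} := by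
      ext c; simp [Set.mem_iInter]
    rw [h2]
    exact isClosed_iInter fun i => isClosed_le continuous_const (continuous_apply i)
  have := hemb.isClosedMap _ hcl
  convert this using 2
  rfl

end Closed

section GenFam

variable {κ : Type*} [Fintype κ] [DecidableEq κ]

/-- Generator family for the cone `span G + nonneg orthant` in `κ → ℝ`. -/
def genFam (G : Finset (κ → ℝ)) : (({v // v ∈ G} ⊕ {v // v ∈ G}) ⊕ κ) → (κ → ℝ) :=
  Sum.elim (Sum.elim (fun g => (g : κ → ℝ)) fun g => -(g : κ → ℝ))
    fun k => Pi.single k 1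

lemma mem_genCone_of_mem_span {G : Finset (κ → ℝ)} {x : κ → ℝ}
    (hx : x ∈ Submodule.span ℝ (G : Set (κ → ℝ))) :
    x ∈ coneGen (Set.range (genFam G)) := by
  classical
  obtain ⟨cf, -, hcf⟩ := Submodule.mem_span_finset.mp hx
  rw [← hcf]
  apply sum_mem_coneGen
  intro g hgG
  have hrep : cf g • g = (max (cf g) 0) • g + (max (-cf g) 0) • (-g) := by
    rcases le_or_gt 0 (cf g) with h0 | h0
    · rw [max_eq_left h0, max_eq_right (by linarith), zero_smul, add_zero]
    · rw [max_eq_right h0.le, max_eq_left (by linarith), zero_smul, zero_add,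
        smul_neg, neg_smul, neg_neg]
  rw [hrep]
  exact add_mem_coneGen
    (smul_mem_coneGen (le_max_right _ _) (mem_coneGen_self ⟨Sum.inl (Sum.inl ⟨g, hgG⟩), rfl⟩))
    (smul_mem_coneGen (le_max_right _ _) (mem_coneGen_self ⟨Sum.inl (Sum.inr ⟨g, hgG⟩), rfl⟩))

lemma mem_genCone_of_nonneg {G : Finset (κ → ℝ)} {g : κ → ℝ} (hg : ∀ k, 0 ≤ g k) :
    g ∈ coneGen (Set.range (genFam G)) := by
  classical
  have hrep : g = ∑ k, g k • (Pi.single k 1 : κ → ℝ) := by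
    rw [← Finset.univ_sum_single g]
    apply Finset.sum_congr rfl
    intro k _
    ext k'
    by_cases hk : k' = k <;> simp [Pi.single_apply, hk]
  rw [hrep]
  exact sum_mem_coneGen _ _ fun k _ =>
    smul_mem_coneGen (hg k) (mem_coneGen_self ⟨Sum.inr k, rfl⟩)

lemma genCone_decomp {G : Finset (κ → ℝ)} {x : κ → ℝ}
    (hx : x ∈ coneGen (Set.range (genFam G))) :
    ∃ v ∈ Submodule.span ℝ (G : Set (κ → ℝ)), ∃ g : κ → ℝ, (∀ k, 0 ≤ g k) ∧ x = v + g := by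
  classical
  obtain ⟨c, hc, rfl⟩ := (coneGen_range_mem_iff (genFam G) x).mp hx
  set V := Submodule.span ℝ (G : Set (κ → ℝ)) with hV
  have hdec : ∀ j, (genFam G j ∈ V) ∨ (∀ k, 0 ≤ genFam G j k) := by
    rintro ((g | g) | k)
    · left; exact Submodule.subset_span g.2
    · left; exact V.neg_mem (Submodule.subset_span g.2)
    · right; intro k'
      by_cases hk : k' = k <;> simp [genFam, Pi.single_apply, hk]
  set vp : (({v // v ∈ G} ⊕ {v // v ∈ G}) ⊕ κ) → (κ → ℝ) :=
    fun j => if genFam G j ∈ V then genFam G j else 0 with hvp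
  refine ⟨∑ j, c j • vp j, Submodule.sum_mem _ fun j _ => Submodule.smul_mem _ _ ?_,
    ∑ j, c j • (genFam G j - vp j), fun k => ?_, ?_⟩
  · by_cases hj : genFam G j ∈ V <;> simp [hvp, hj, Submodule.zero_mem]
  · rw [Finset.sum_apply]
    apply Finset.sum_nonneg
    intro j _
    have hgpj : 0 ≤ (genFam G j - vp j) k := by
      by_cases hj : genFam G j ∈ V
      · simp [hvp, hj]
      · have := (hdec j).resolve_left hj
        simp [hvp, hj, this k]
    have hc' : (c j • (genFam G j - vp j)) k = c j * (genFam G j - vp j) k := rfl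
    rw [hc']
    exact mul_nonneg (hc j) hgpj
  · rw [← Finset.sum_add_distrib]
    apply Finset.sum_congr rfl
    intro j _
    rw [← smul_add, add_sub_cancel]

end GenFam

section Motzkin

variable {X : Type*} [AddCommGroup X] [Module ℝ X]

set_option maxHeartbeats 1000000 in
/-- Motzkin transposition theorem (homogeneous form) on a submodule `W`. -/
lemma motzkin_alternative {ι₁ ι₂ : Type*} [Fintype ι₁] [Fintype ι₂] [Nonempty ι₁]
    (W : Submodule ℝ X) (a : ι₁ → X →ₗ[ℝ] ℝ) (b : ι₂ → X →ₗ[ℝ] ℝ)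
    (h : ¬∃ w ∈ W, (∀ k, a k w < 0) ∧ (∀ i, b i w ≤ 0)) :
    ∃ (ξ : ι₁ → ℝ) (ζ : ι₂ → ℝ), (∀ k, 0 ≤ ξ k) ∧ (∀ i, 0 ≤ ζ i) ∧ (∑ k, ξ k = 1) ∧
      ∀ w ∈ W, (∑ k, ξ k * a k w) + (∑ i, ζ i * b i w) = 0 := by
  classical
  set φ : ι₁ ⊕ ι₂ → X →ₗ[ℝ] ℝ := Sum.elim a b with hφ
  set T : X →ₗ[ℝ] (ι₁ ⊕ ι₂ → ℝ) := LinearMap.pi fun k => φ k with hT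
  obtain ⟨G, hG⟩ := (IsNoetherian.noetherian (W.map T) : (W.map T).FG)
  set M : Set (ι₁ ⊕ ι₂ → ℝ) := coneGen (Set.range (genFam G)) with hM
  set x₀ : ι₁ ⊕ ι₂ → ℝ := Sum.elim (fun _ => (-1 : ℝ)) (fun _ => 0) with hx₀def
  have hx₀ : x₀ ∉ M := by
    intro hmem
    obtain ⟨v, hvV, g, hg, hsplit⟩ := genCone_decomp hmem
    rw [hG] at hvV
    obtain ⟨w, hwW, hwv⟩ := hvV
    apply h
    refine ⟨w, hwW, fun k => ?_, fun i => ?_⟩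
    · have h1 : T w (Sum.inl k) = x₀ (Sum.inl k) - g (Sum.inl k) := by
        rw [hwv]
        have := congrFun hsplit (Sum.inl k)
        simp only [Pi.add_apply] at this
        linarith
      simp only [hT, LinearMap.pi_apply, hφ, Sum.elim_inl] at h1
      have hx0 : x₀ (Sum.inl k) = -1 := rfl
      rw [hx0] at h1
      have := hg (Sum.inl k)
      linarith
    · have h1 : T w (Sum.inr i) = x₀ (Sum.inr i) - g (Sum.inr i) := by
        rw [hwv]
        have := congrFun hsplit (Sum.inr i)
        simp only [Pi.add_apply] at this
        linarith
      simp only [hT, LinearMap.pi_apply, hφ, Sum.elim_inr] at h1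
      have hx0 : x₀ (Sum.inr i) = 0 := rfl
      rw [hx0] at h1
      have := hg (Sum.inr i)
      linarith
  obtain ⟨F, u, hFM, hFx₀⟩ :=
    geometric_hahn_banach_closed_point (convex_coneGen) (isClosed_coneGen_range (genFam G)) hx₀
  have hu0 : 0 < u := by
    have := hFM 0 zero_mem_coneGen
    simpa using this
  have hFnonpos : ∀ m ∈ M, F m ≤ 0 := by
    intro m hm
    by_contra hpos
    push_neg at hpos
    have h2 := hFM ((u / F m + 1) • m) (smul_mem_coneGen (by positivity) hm)
    rw [map_smul] at h2
    have h3 : (u / F m + 1) • F m = u + F m := by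
      rw [smul_eq_mul]; field_simp
    rw [h3] at h2
    linarith
  set η : ι₁ ⊕ ι₂ → ℝ := fun k => -(F (Pi.single k 1 : ι₁ ⊕ ι₂ → ℝ)) with hη
  have hη0 : ∀ k, 0 ≤ η k := fun k => by
    have := hFnonpos _ (mem_coneGen_self ⟨Sum.inr k, rfl⟩)
    simp only [genFam, Sum.elim_inr] at this
    simp only [hη]; linarith
  have hFeval : ∀ x : ι₁ ⊕ ι₂ → ℝ, F x = -∑ k, η k * x k := by
    intro x
    have hxsum : x = ∑ k, x k • (Pi.single k 1 : ι₁ ⊕ ι₂ → ℝ) := by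
      rw [← Finset.univ_sum_single x]
      apply Finset.sum_congr rfl
      intro k _
      ext k'
      by_cases hk : k' = k <;> simp [Pi.single_apply, hk]
    conv_lhs => rw [hxsum]
    rw [map_sum]
    simp only [map_smul, smul_eq_mul, hη]
    rw [← Finset.sum_neg_distrib]
    apply Finset.sum_congr rfl
    intro k _
    ring
  have hFV0 : ∀ vv ∈ W.map T, F vv = 0 := by
    intro vv hvv
    rw [← hG] at hvv
    have hneg : -vv ∈ Submodule.span ℝ ((G : Finset (ι₁ ⊕ ι₂ → ℝ)) : Set (ι₁ ⊕ ι₂ → ℝ)) :=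
      Submodule.neg_mem _ hvv
    have h1 := hFnonpos vv (mem_genCone_of_mem_span hvv)
    have h2 := hFnonpos (-vv) (mem_genCone_of_mem_span hneg)
    rw [map_neg] at h2
    linarith
  set S : ℝ := ∑ k : ι₁, η (Sum.inl k) with hS
  have hSx₀ : F x₀ = S := by
    rw [hFeval, Fintype.sum_sum_type]
    simp [hx₀def, hS]
  have hSpos : 0 < S := by rw [← hSx₀]; linarith
  refine ⟨fun k => η (Sum.inl k) / S, fun i => η (Sum.inr i) / S,
    fun k => div_nonneg (hη0 _) hSpos.le, fun i => div_nonneg (hη0 _) hSpos.le, ?_, ?_⟩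
  · rw [← Finset.sum_div, ← hS, div_self hSpos.ne']
  · intro w hw
    have hTw : F (T w) = 0 := hFV0 _ ⟨w, hw, rfl⟩
    rw [hFeval] at hTw
    have hTwk : ∀ k, (T w) k = φ k w := fun k => rfl
    have hsum0 : ∑ k, η k * (T w) k = 0 := by linarith
    rw [Fintype.sum_sum_type] at hsum0
    simp only [hTwk, hφ, Sum.elim_inl, Sum.elim_inr] at hsum0
    have hdiv : (∑ k, η (Sum.inl k) / S * a k w) + (∑ i, η (Sum.inr i) / S * b i w)
        = ((∑ k, η (Sum.inl k) * a k w) + (∑ i, η (Sum.inr i) * b i w)) / S := by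
      rw [add_div, Finset.sum_div, Finset.sum_div]
      congr 1 <;> exact Finset.sum_congr rfl fun k _ => by ring
    rw [hdiv, hsum0, zero_div]

end Motzkin

set_option maxHeartbeats 1000000 in
/-- **Optimality condition IV.**  With `D = {x | A x = y ∧ ⟨xsᵢ, x⟩ ≤ αᵢ}` nonempty and `f`
proper generalized polyhedral convex, `dom f = {x | B x = z ∧ ⟨usⱼ, x⟩ ≤ γsⱼ}`,
`f = max {⟨vₖ, ·⟩ + βₖ}` on `dom f`: a point `x ∈ D ∩ dom f` solves `(P)` iff
`0 ∈ conv {vₖ : k ∈ Θ(x)} + cone {xsᵢ : i ∈ I(x)} + cone {usⱼ : j ∈ J(x)}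
   + (ker A ∩ ker B)^⊥`,
where `Θ(x), I(x), J(x)` are the active index sets at `x`. -/
theorem optimality_condition_IV
    {X Y Z : Type*}
    [AddCommGroup X] [Module ℝ X] [TopologicalSpace X] [IsTopologicalAddGroup X]
    [ContinuousSMul ℝ X] [LocallyConvexSpace ℝ X] [T2Space X]
    [AddCommGroup Y] [Module ℝ Y] [TopologicalSpace Y] [IsTopologicalAddGroup Y]
    [ContinuousSMul ℝ Y] [LocallyConvexSpace ℝ Y] [T2Space Y]
    [AddCommGroup Z] [Module ℝ Z] [TopologicalSpace Z] [IsTopologicalAddGroup Z]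
    [ContinuousSMul ℝ Z] [LocallyConvexSpace ℝ Z] [T2Space Z]
    (A : X →L[ℝ] Y) (y : Y) (p : ℕ) (xs : Fin p → X →L[ℝ] ℝ) (α : Fin p → ℝ)
    (B : X →L[ℝ] Z) (z : Z) (q : ℕ) (us : Fin q → X →L[ℝ] ℝ) (γs : Fin q → ℝ)
    (m : ℕ) (v : Fin (m + 1) → X →L[ℝ] ℝ) (β : Fin (m + 1) → ℝ)
    (D : Set X) (hD : D = {x | A x = y ∧ ∀ i, xs i x ≤ α i})
    (domf : Set X) (hdomf : domf = {x | B x = z ∧ ∀ j, us j x ≤ γs j})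
    (hdomne : domf.Nonempty)
    (f : X → EReal)
    (hf : ∀ x ∈ domf,
      f x = ((Finset.univ.sup' Finset.univ_nonempty fun k => v k x + β k : ℝ) : EReal))
    (hf' : ∀ x ∉ domf, f x = ⊤)
    (x : X) (hxD : x ∈ D) (hxdom : x ∈ domf) :
    (∀ u ∈ D, f x ≤ f u) ↔
      (0 : X →L[ℝ] ℝ) ∈
        convexHull ℝ {w : X →L[ℝ] ℝ | ∃ k, ((v k x + β k : ℝ) : EReal) = f x ∧ w = v k} +
          coneGen {w : X →L[ℝ] ℝ | ∃ i, xs i x = α i ∧ w = xs i} +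
          coneGen {w : X →L[ℝ] ℝ | ∃ j, us j x = γs j ∧ w = us j} +
          {φ : X →L[ℝ] ℝ | ∀ u : X, A u = 0 → B u = 0 → φ u = 0} := by
  classical
  set F : X → ℝ := fun u => Finset.univ.sup' Finset.univ_nonempty fun k => v k u + β k
    with hFdef
  have hfx : f x = ((F x : ℝ) : EReal) := hf x hxdom
  have hle_sup : ∀ (x' : X) (k : Fin (m + 1)), v k x' + β k ≤ F x' := by
    intro x' k
    rw [hFdef]
    exact Finset.le_sup' (fun k => v k x' + β k) (Finset.mem_univ k)
  have hxA : A x = y := (hD ▸ hxD).1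
  have hxIneq : ∀ i, xs i x ≤ α i := (hD ▸ hxD).2
  have hxB : B x = z := (hdomf ▸ hxdom).1
  have hxIneq' : ∀ j, us j x ≤ γs j := (hdomf ▸ hxdom).2
  -- the `(ker A ∩ ker B)` submodule
  set W : Submodule ℝ X := LinearMap.ker (A : X →ₗ[ℝ] Y) ⊓ LinearMap.ker (B : X →ₗ[ℝ] Z) with hWdef
  constructor
  · -- forward direction
    intro hopt
    -- active index types
    have hne : Nonempty {k : Fin (m + 1) // v k x + β k = F x} := by
      obtain ⟨k, _, hk⟩ := Finset.exists_mem_eq_sup' (Finset.univ_nonempty)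
        (fun k => v k x + β k)
      exact ⟨⟨k, hk.symm⟩⟩
    set a : {k : Fin (m + 1) // v k x + β k = F x} → X →ₗ[ℝ] ℝ :=
      fun k => (v k.1).toLinearMap with hadef
    set b : ({i : Fin p // xs i x = α i} ⊕ {j : Fin q // us j x = γs j}) → X →ₗ[ℝ] ℝ :=
      Sum.elim (fun i => (xs i.1).toLinearMap) (fun j => (us j.1).toLinearMap) with hbdef
    -- infeasibility of the strict system
    have hinf : ¬∃ w ∈ W, (∀ k, a k w < 0) ∧ (∀ i, b i w ≤ 0) := by
      rintro ⟨w, hwW, hstrict, hineq⟩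
      obtain ⟨hwA, hwB⟩ := Submodule.mem_inf.mp hwW
      rw [LinearMap.mem_ker, ContinuousLinearMap.coe_coe] at hwA hwB
      -- step sizes
      set δ : Fin p → ℝ := fun i => if 0 < xs i w then (α i - xs i x) / xs i w else 1
        with hδdef
      set σ : Fin q → ℝ := fun j => if 0 < us j w then (γs j - us j x) / us j w else 1
        with hσdef
      set τ : Fin (m + 1) → ℝ :=
        fun k => if 0 < v k w then (F x - (v k x + β k)) / (2 * v k w) else 1 with hτdef
      have hδ : ∀ i, 0 < δ i := by
        intro i
        by_cases h : 0 < xs i w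
        · rw [hδdef]; simp only [if_pos h]
          apply div_pos _ h
          rcases eq_or_lt_of_le (hxIneq i) with heq | hlt
          · exact absurd (hineq (Sum.inl ⟨i, heq⟩)) (by simp [hbdef]; exact h)
          · linarith
        · rw [hδdef]; simp only [if_neg h]; norm_num
      have hσp : ∀ j, 0 < σ j := by
        intro j
        by_cases h : 0 < us j w
        · rw [hσdef]; simp only [if_pos h]
          apply div_pos _ h
          rcases eq_or_lt_of_le (hxIneq' j) with heq | hlt
          · exact absurd (hineq (Sum.inr ⟨j, heq⟩)) (by simp [hbdef]; exact h)
          · linarith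
        · rw [hσdef]; simp only [if_neg h]; norm_num
      have hτp : ∀ k, 0 < τ k := by
        intro k
        by_cases h : 0 < v k w
        · rw [hτdef]; simp only [if_pos h]
          apply div_pos _ (by linarith)
          have hle : v k x + β k ≤ F x := hle_sup x k
          rcases eq_or_lt_of_le hle with heq | hlt
          · exact absurd (hstrict ⟨k, heq⟩) (by simp [hadef]; exact h.le)
          · linarith
        · rw [hτdef]; simp only [if_neg h]; norm_num
      -- the step size t
      set th : Finset ℝ :=
        insert 1 ((Finset.univ.image δ ∪ Finset.univ.image σ) ∪ Finset.univ.image τ)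
        with hthdef
      have hthne : th.Nonempty := ⟨1, Finset.mem_insert_self _ _⟩
      set t : ℝ := th.min' hthne with htdef
      have ht0 : 0 < t := by
        rw [htdef]
        apply (Finset.lt_min'_iff th hthne).mpr
        intro bb hbb
        rw [hthdef, Finset.mem_insert] at hbb
        rcases hbb with rfl | hbb
        · norm_num
        rw [Finset.mem_union] at hbb
        rcases hbb with hbb | hbb
        · rw [Finset.mem_union] at hbb
          rcases hbb with hbb | hbb <;>
            · obtain ⟨i, _, rfl⟩ := Finset.mem_image.mp hbb
              first | exact hδ i | exact hσp i
        · obtain ⟨k, _, rfl⟩ := Finset.mem_image.mp hbb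
          exact hτp k
      have htδ : ∀ i, t ≤ δ i := fun i =>
        Finset.min'_le _ _ (Finset.mem_insert_of_mem (Finset.mem_union_left _
          (Finset.mem_union_left _ (Finset.mem_image_of_mem δ (Finset.mem_univ i)))))
      have htσ : ∀ j, t ≤ σ j := fun j =>
        Finset.min'_le _ _ (Finset.mem_insert_of_mem (Finset.mem_union_left _
          (Finset.mem_union_right _ (Finset.mem_image_of_mem σ (Finset.mem_univ j)))))
      have htτ : ∀ k, t ≤ τ k := fun k =>
        Finset.min'_le _ _ (Finset.mem_insert_of_mem (Finset.mem_union_right _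
          (Finset.mem_image_of_mem τ (Finset.mem_univ k))))
      -- the competitor point
      set u : X := x + t • w with hudef
      have huD : u ∈ D := by
        rw [hD]
        refine ⟨by rw [hudef, map_add, map_smul, hwA, smul_zero, add_zero, hxA], fun i => ?_⟩
        have happ : xs i u = xs i x + t * xs i w := by
          rw [hudef, map_add, map_smul, smul_eq_mul]
        by_cases h : 0 < xs i w
        · have h1 : t * xs i w ≤ δ i * xs i w :=
            mul_le_mul_of_nonneg_right (htδ i) h.le
          have h2 : δ i * xs i w = α i - xs i x := by
            rw [hδdef]; simp only [if_pos h]; field_simp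
          linarith [happ]
        · push_neg at h
          have h1 : t * xs i w ≤ 0 := mul_nonpos_of_nonneg_of_nonpos ht0.le h
          have := hxIneq i
          linarith [happ]
      have hudom : u ∈ domf := by
        rw [hdomf]
        refine ⟨by rw [hudef, map_add, map_smul, hwB, smul_zero, add_zero, hxB], fun j => ?_⟩
        have happ : us j u = us j x + t * us j w := by
          rw [hudef, map_add, map_smul, smul_eq_mul]
        by_cases h : 0 < us j w
        · have h1 : t * us j w ≤ σ j * us j w :=
            mul_le_mul_of_nonneg_right (htσ j) h.le
          have h2 : σ j * us j w = γs j - us j x := by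
            rw [hσdef]; simp only [if_pos h]; field_simp
          linarith [happ]
        · push_neg at h
          have h1 : t * us j w ≤ 0 := mul_nonpos_of_nonneg_of_nonpos ht0.le h
          have := hxIneq' j
          linarith [happ]
      -- strict decrease of the objective
      have hFu : F u < F x := by
        rw [hFdef]
        apply (Finset.sup'_lt_iff Finset.univ_nonempty).mpr
        intro k _
        have happ : v k u + β k = (v k x + β k) + t * v k w := by
          rw [hudef, map_add, map_smul, smul_eq_mul]; ring
        have hle : v k x + β k ≤ F x := hle_sup x k
        rcases eq_or_lt_of_le hle with heq | hlt
        · have hneg : v k w < 0 := hstrict ⟨k, heq⟩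
          have : t * v k w < 0 := mul_neg_of_pos_of_neg ht0 hneg
          rw [happ, heq]; linarith
        · by_cases h : 0 < v k w
          · have h1 : t * v k w ≤ τ k * v k w := mul_le_mul_of_nonneg_right (htτ k) h.le
            have h2 : τ k * v k w = (F x - (v k x + β k)) / 2 := by
              rw [hτdef]; simp only [if_pos h]
              field_simp
            rw [happ]; linarith
          · push_neg at h
            have h1 : t * v k w ≤ 0 := mul_nonpos_of_nonneg_of_nonpos ht0.le h
            rw [happ]; linarith
      -- contradiction with optimality
      have hcmp := hopt u huD
      rw [hf u hudom, hfx] at hcmp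
      have : F x ≤ F u := EReal.coe_le_coe_iff.mp hcmp
      linarith
    -- apply the Motzkin alternative
    obtain ⟨ξ, ζ, hξ0, hζ0, hξ1, horth⟩ := motzkin_alternative W a b hinf
    set c : X →L[ℝ] ℝ := ∑ k, ξ k • v k.1 with hcdef
    set s₁ : X →L[ℝ] ℝ := ∑ i : {i : Fin p // xs i x = α i}, ζ (Sum.inl i) • xs i.1
      with hs₁def
    set s₂ : X →L[ℝ] ℝ := ∑ j : {j : Fin q // us j x = γs j}, ζ (Sum.inr j) • us j.1
      with hs₂def
    have hcmem : c ∈ convexHull ℝ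
        {w : X →L[ℝ] ℝ | ∃ k, ((v k x + β k : ℝ) : EReal) = f x ∧ w = v k} := by
      rw [hcdef]
      apply Convex.sum_mem (convex_convexHull ℝ _) (fun k _ => hξ0 k) hξ1
      intro k _
      apply subset_convexHull
      exact ⟨k.1, by rw [hfx]; exact_mod_cast k.2, rfl⟩
    have hs₁mem : s₁ ∈ coneGen {w : X →L[ℝ] ℝ | ∃ i, xs i x = α i ∧ w = xs i} := by
      rw [hs₁def]
      exact sum_mem_coneGen _ _ fun i _ =>
        smul_mem_coneGen (hζ0 _) (mem_coneGen_self ⟨i.1, i.2, rfl⟩)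
    have hs₂mem : s₂ ∈ coneGen {w : X →L[ℝ] ℝ | ∃ j, us j x = γs j ∧ w = us j} := by
      rw [hs₂def]
      exact sum_mem_coneGen _ _ fun j _ =>
        smul_mem_coneGen (hζ0 _) (mem_coneGen_self ⟨j.1, j.2, rfl⟩)
    have hφmem : -(c + s₁ + s₂) ∈
        {φ : X →L[ℝ] ℝ | ∀ u : X, A u = 0 → B u = 0 → φ u = 0} := by
      intro u hA hB
      have hu : u ∈ W := Submodule.mem_inf.mpr ⟨LinearMap.mem_ker.mpr hA,
        LinearMap.mem_ker.mpr hB⟩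
      have h0 := horth u hu
      rw [Fintype.sum_sum_type] at h0
      simp only [hadef, hbdef, Sum.elim_inl, Sum.elim_inr, ContinuousLinearMap.coe_coe] at h0
      simp only [ContinuousLinearMap.neg_apply, ContinuousLinearMap.add_apply, hcdef,
        hs₁def, hs₂def, ContinuousLinearMap.sum_apply, ContinuousLinearMap.smul_apply,
        smul_eq_mul]
      linarith
    have hzero : (0 : X →L[ℝ] ℝ) = c + s₁ + s₂ + -(c + s₁ + s₂) := by abel
    rw [hzero]
    exact Set.add_mem_add (Set.add_mem_add (Set.add_mem_add hcmem hs₁mem) hs₂mem) hφmem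
  · -- backward direction
    intro hmem u huD
    by_cases hudom : u ∈ domf
    case neg => rw [hf' u hudom]; exact le_top
    rw [hf u hudom, hfx, EReal.coe_le_coe_iff]
    -- decompose the membership
    obtain ⟨g3, hg3, φ, hφ, hsum3⟩ := Set.mem_add.mp hmem
    obtain ⟨g2, hg2, s₂, hs₂, hsum2⟩ := Set.mem_add.mp hg3
    obtain ⟨c, hc, s₁, hs₁, hsum1⟩ := Set.mem_add.mp hg2
    have hceq : c + s₁ + s₂ + φ = 0 := by
      rw [← hsum1] at hsum2; rw [← hsum2] at hsum3; rw [hsum3]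
    -- the constraints on u
    have huA : A u = y := (hD ▸ huD).1
    have huIneq : ∀ i, xs i u ≤ α i := (hD ▸ huD).2
    have huB : B u = z := (hdomf ▸ hudom).1
    have huIneq' : ∀ j, us j u ≤ γs j := (hdomf ▸ hudom).2
    -- evaluate the identity at u - x
    have heval : c (u - x) + s₁ (u - x) + s₂ (u - x) + φ (u - x) = 0 := by
      have := congrArg (fun g : X →L[ℝ] ℝ => g (u - x)) hceq
      simpa using this
    have hφ0 : φ (u - x) = 0 :=
      hφ (u - x) (by rw [map_sub, huA, hxA, sub_self]) (by rw [map_sub, huB, hxB, sub_self])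
    have hs₁0 : s₁ (u - x) ≤ 0 := by
      obtain ⟨n, cc, ws, hcc, hws, rfl⟩ := hs₁
      rw [ContinuousLinearMap.sum_apply]
      apply Finset.sum_nonpos
      intro i _
      rw [ContinuousLinearMap.smul_apply, smul_eq_mul]
      obtain ⟨i', hact, heq⟩ := hws i
      apply mul_nonpos_of_nonneg_of_nonpos (hcc i)
      rw [heq, map_sub, hact]
      have := huIneq i'
      linarith
    have hs₂0 : s₂ (u - x) ≤ 0 := by
      obtain ⟨n, cc, ws, hcc, hws, rfl⟩ := hs₂
      rw [ContinuousLinearMap.sum_apply]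
      apply Finset.sum_nonpos
      intro j _
      rw [ContinuousLinearMap.smul_apply, smul_eq_mul]
      obtain ⟨j', hact, heq⟩ := hws j
      apply mul_nonpos_of_nonneg_of_nonpos (hcc j)
      rw [heq, map_sub, hact]
      have := huIneq' j'
      linarith
    have hc0 : 0 ≤ c (u - x) := by linarith
    -- decode the convex hull membership
    rw [convexHull_eq] at hc
    obtain ⟨ι', tt, wt, zf, hwt0, hwt1, hz, hcm⟩ := hc
    rw [Finset.centerMass_eq_of_sum_1 _ _ hwt1] at hcm
    have hkey : ∀ i ∈ tt, (zf i) (u - x) ≤ F u - F x := by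
      intro i hi
      obtain ⟨k, hk1, heq⟩ := hz i hi
      have hk1' : v k x + β k = F x := by
        rw [hfx] at hk1; exact_mod_cast hk1
      have hle : v k u + β k ≤ F u := hle_sup u k
      rw [heq, map_sub]
      linarith
    have hceval : c (u - x) ≤ F u - F x := by
      rw [← hcm, ContinuousLinearMap.sum_apply]
      calc ∑ i ∈ tt, (wt i • zf i) (u - x)
          ≤ ∑ i ∈ tt, wt i * (F u - F x) := by
            apply Finset.sum_le_sum
            intro i hi
            rw [ContinuousLinearMap.smul_apply, smul_eq_mul]
            exact mul_le_mul_of_nonneg_left (hkey i hi) (hwt0 i hi)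
        _ = F u - F x := by rw [← Finset.sum_mul, hwt1, one_mul]
    linarith
end

section
/- (Strong duality theorem I) Assume that either f is a proper polyhedral convex function and D is a nonempty generalized polyhedral convex set, or f is a proper generalized polyhedral convex function and D is a nonempty polyhedral convex set. If one of the problems (P), (D) has a solution, then both have solutions and the optimal values of (P) and (D) are equal. -/
open Finset Matrix

namespace SD

variable {ι : Type} [Fintype ι] [DecidableEq ι] {κ : Type} [Fintype κ] [DecidableEq κ]




/-- Representation lemma: every linear functional on `ι → ℝ` is a dot product. -/
lemma dot_rep (f : Module.Dual ℝ (ι → ℝ)) (z : ι → ℝ) :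
    z ⬝ᵥ (fun i => f (Pi.single i 1)) = f z := by
  have h1 : f z = f (∑ i, Pi.single i (z i)) := by rw [Finset.univ_sum_single]
  rw [h1, map_sum]
  refine Finset.sum_congr rfl fun i _ => ?_
  have h2 : (Pi.single i (z i) : ι → ℝ) = z i • (Pi.single i (1:ℝ) : ι → ℝ) := by
    have h3 := Pi.single_smul (f := fun _ : ι => ℝ) i (z i) 1
    simp only [smul_eq_mul, mul_one] at h3
    exact h3
  rw [h2, f.map_smul, smul_eq_mul]

/-- Conic Carathéodory. -/
lemma cone_carath {V : Type*} [AddCommGroup V] [Module ℝ V] (a : κ → V)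
    (s : Finset κ) :
    ∀ (c : κ → ℝ), (∀ i, 0 ≤ c i) →
    ∃ (t : Finset κ) (d : κ → ℝ), t ⊆ s ∧ (∀ i, 0 ≤ d i) ∧
      LinearIndependent ℝ (fun i : t => a i) ∧ ∑ i ∈ t, d i • a i = ∑ i ∈ s, c i • a i := by
  classical
  induction s using Finset.strongInduction with
  | _ s IH =>
    intro c hc
    by_cases hli : LinearIndependent ℝ (fun i : s => a i)
    · exact ⟨s, c, subset_rfl, hc, hli, rfl⟩
    · obtain ⟨g, hg0, j₀, hj₀⟩ := Fintype.not_linearIndependent_iff.mp hli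
      -- extend g to Fin k
      set gE : κ → ℝ := fun i => if h : i ∈ s then g ⟨i, h⟩ else 0 with hgE
      have hsum : ∑ i ∈ s, gE i • a i = 0 := by
        rw [← hg0, ← Finset.sum_attach s (fun i => gE i • a i)]
        refine Finset.sum_congr rfl fun i _ => by simp [hgE, i.2]
      have hgEj₀ : gE (j₀ : κ) ≠ 0 := by simp [hgE, j₀.2, hj₀]
      -- WLOG there is a positive coefficient
      obtain ⟨g', hg'sum, hg'pos⟩ :
          ∃ g' : κ → ℝ, ∑ i ∈ s, g' i • a i = 0 ∧ ∃ i ∈ s, 0 < g' i := by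
        rcases lt_or_gt_of_ne hgEj₀ with h | h
        · exact ⟨-gE, by simp [hsum], ⟨j₀, j₀.2, by simpa using h⟩⟩
        · exact ⟨gE, hsum, ⟨j₀, j₀.2, h⟩⟩
      set F := s.filter (fun i => 0 < g' i) with hF
      have hFne : F.Nonempty := by
        obtain ⟨i, hi, hpos⟩ := hg'pos
        exact ⟨i, Finset.mem_filter.mpr ⟨hi, hpos⟩⟩
      obtain ⟨i₀, hi₀F, hi₀min⟩ := Finset.exists_min_image F (fun i => c i / g' i) hFne
      have hi₀s : i₀ ∈ s := (Finset.mem_filter.mp hi₀F).1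
      have hi₀pos : 0 < g' i₀ := (Finset.mem_filter.mp hi₀F).2
      set τ := c i₀ / g' i₀ with hτ
      have hτ0 : 0 ≤ τ := div_nonneg (hc i₀) hi₀pos.le
      set c' : κ → ℝ := fun i => if i ∈ s then c i - τ * g' i else 0 with hc'
      have hc'0 : ∀ i, 0 ≤ c' i := by
        intro i
        by_cases hi : i ∈ s
        · simp only [hc', if_pos hi]
          rcases le_or_gt (g' i) 0 with hgi | hgi
          · nlinarith [hc i]
          · have : τ ≤ c i / g' i := hi₀min i (Finset.mem_filter.mpr ⟨hi, hgi⟩)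
            rw [le_div_iff₀ hgi] at this
            linarith
        · simp [hc', if_neg hi]
      have hc'i₀ : c' i₀ = 0 := by
        simp only [hc', if_pos hi₀s, hτ]
        field_simp
        ring
      have hsum' : ∑ i ∈ s.erase i₀, c' i • a i = ∑ i ∈ s, c i • a i := by
        rw [Finset.sum_erase _ (by rw [hc'i₀, zero_smul])]
        have : ∑ i ∈ s, c' i • a i = ∑ i ∈ s, (c i • a i - τ • (g' i • a i)) := by
          refine Finset.sum_congr rfl fun i hi => ?_
          simp [hc', if_pos hi, sub_smul, smul_smul]
        rw [this, Finset.sum_sub_distrib, ← Finset.smul_sum, hg'sum, smul_zero, sub_zero]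
      obtain ⟨t, d, hts, hd0, hli', hsum''⟩ := IH (s.erase i₀) (Finset.erase_ssubset hi₀s) c' hc'0
      exact ⟨t, d, hts.trans (Finset.erase_subset _ _), hd0, hli', by rw [hsum'', hsum']⟩

/-- Finitely generated cones in `ι → ℝ` are closed. -/
lemma cone_closed (a : κ → (ι → ℝ)) :
    IsClosed {x : ι → ℝ | ∃ c : κ → ℝ, (∀ i, 0 ≤ c i) ∧ x = ∑ i, c i • a i} := by
  classical
  have key : {x : ι → ℝ | ∃ c : κ → ℝ, (∀ i, 0 ≤ c i) ∧ x = ∑ i, c i • a i}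
      = ⋃ t ∈ {t : Finset κ | LinearIndependent ℝ (fun i : t => a i)},
        {x : ι → ℝ | ∃ c : κ → ℝ, (∀ i, 0 ≤ c i) ∧ x = ∑ i ∈ t, c i • a i} := by
    ext x
    constructor
    · rintro ⟨c, hc, rfl⟩
      obtain ⟨t, d, _, hd, hli, hsum⟩ := cone_carath a Finset.univ c hc
      exact Set.mem_biUnion hli ⟨d, hd, hsum.symm⟩
    · rintro ⟨S, ⟨t, rfl⟩, hx⟩
      simp only [Set.mem_iUnion, Set.mem_setOf_eq] at hx
      obtain ⟨_, c, hc, rfl⟩ := hx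
      refine ⟨fun i => if i ∈ t then c i else 0,
        fun i => by by_cases h : i ∈ t <;> simp [h, hc i], ?_⟩
      have : ∀ i : κ, (if i ∈ t then c i else 0) • a i
          = if i ∈ t then c i • a i else 0 := by
        intro i; by_cases h : i ∈ t <;> simp [h]
      simp only [this]
      rw [Finset.sum_ite_mem, Finset.univ_inter]
  rw [key]
  refine Set.Finite.isClosed_biUnion (Set.toFinite _) ?_
  rintro t hli
  -- the map (t → ℝ) → (ι → ℝ)
  set φ : (t → ℝ) →ₗ[ℝ] (ι → ℝ) :=
    { toFun := fun c => ∑ i : t, c i • a i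
      map_add' := by intro c d; simp [add_smul, Finset.sum_add_distrib]
      map_smul' := by intro r c; simp [smul_smul, Finset.smul_sum] } with hφ
  have hker : LinearMap.ker φ = ⊥ := by
    rw [LinearMap.ker_eq_bot']
    intro c hc0
    exact funext (Fintype.linearIndependent_iff.mp hli c hc0)
  have hce : Topology.IsClosedEmbedding φ := LinearMap.isClosedEmbedding_of_injective hker
  have horth : IsClosed {c : t → ℝ | ∀ i, 0 ≤ c i} := by
    have : {c : t → ℝ | ∀ i, 0 ≤ c i} = ⋂ i, (fun c : t → ℝ => c i) ⁻¹' Set.Ici 0 := by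
      ext c; simp [Set.mem_iInter]
    rw [this]
    exact isClosed_iInter fun i => IsClosed.preimage (continuous_apply i) isClosed_Ici
  have himg : {x : ι → ℝ | ∃ c : κ → ℝ, (∀ i, 0 ≤ c i) ∧ x = ∑ i ∈ t, c i • a i}
      = φ '' {c : t → ℝ | ∀ i, 0 ≤ c i} := by
    ext x
    constructor
    · rintro ⟨c, hc, rfl⟩
      refine ⟨fun i => c i, fun i => hc i, ?_⟩
      simp only [hφ, LinearMap.coe_mk, AddHom.coe_mk]
      exact Finset.sum_coe_sort t (fun i => c i • a i)
    · rintro ⟨c, hc, rfl⟩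
      refine ⟨fun i => if h : i ∈ t then c ⟨i, h⟩ else 0, fun i => by
        by_cases h : i ∈ t <;> simp [h, hc _], ?_⟩
      simp only [hφ, LinearMap.coe_mk, AddHom.coe_mk]
      rw [← Finset.sum_coe_sort t (fun i => (if h : i ∈ t then c ⟨i, h⟩ else 0) • a i)]
      refine Finset.sum_congr rfl fun i _ => by simp [i.2]
  rw [himg]
  exact hce.isClosedMap _ horth




/-- Homogeneous Farkas lemma. -/
theorem farkas {k : ℕ} (a : Fin k → (ι → ℝ)) (b : ι → ℝ)
    (h : ∀ x : ι → ℝ, (∀ i, a i ⬝ᵥ x ≤ 0) → b ⬝ᵥ x ≤ 0) :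
    ∃ c : Fin k → ℝ, (∀ i, 0 ≤ c i) ∧ b = ∑ i, c i • a i := by
  classical
  set C := {x : ι → ℝ | ∃ c : Fin k → ℝ, (∀ i, 0 ≤ c i) ∧ x = ∑ i, c i • a i} with hC
  by_contra hb
  have hbC : b ∉ C := fun ⟨c, hc, hbc⟩ => hb ⟨c, hc, hbc⟩
  have hconv : Convex ℝ C := by
    rintro x ⟨c, hc, rfl⟩ y ⟨d, hd, rfl⟩ s t hs ht hst
    refine ⟨fun i => s * c i + t * d i,
      fun i => by have := hc i; have := hd i; positivity, ?_⟩
    rw [Finset.smul_sum, Finset.smul_sum, ← Finset.sum_add_distrib]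
    refine Finset.sum_congr rfl fun i _ => ?_
    simp [add_smul, smul_smul]
  obtain ⟨F, u, hFu, hub⟩ := geometric_hahn_banach_closed_point hconv (cone_closed a) hbC
  have h0C : (0 : ι → ℝ) ∈ C := ⟨0, fun i => le_rfl, by simp⟩
  have hu0 : 0 < u := by have := hFu 0 h0C; simpa using this
  have hsmul : ∀ (s : ℝ), 0 ≤ s → ∀ y ∈ C, s • y ∈ C := by
    rintro s hs y ⟨c, hc, rfl⟩
    refine ⟨fun i => s * c i, fun i => mul_nonneg hs (hc i), ?_⟩
    rw [Finset.smul_sum]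
    exact Finset.sum_congr rfl fun i _ => by simp [smul_smul]
  have hFle : ∀ y ∈ C, F y ≤ 0 := by
    intro y hy
    by_contra hpos
    push_neg at hpos
    have := hFu _ (hsmul (u / F y) (div_nonneg hu0.le hpos.le) y hy)
    rw [F.map_smul, smul_eq_mul, div_mul_cancel₀ _ (ne_of_gt hpos)] at this
    exact lt_irrefl u this
  -- representing vector for F
  set x : ι → ℝ := fun i => F (Pi.single i 1) with hx
  have hrep : ∀ y : ι → ℝ, y ⬝ᵥ x = F y := fun y =>
    dot_rep (F.toLinearMap) y
  have haC : ∀ i, a i ∈ C := by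
    intro i
    refine ⟨fun j => if j = i then 1 else 0, fun j => by positivity, ?_⟩
    simp [ite_smul]
  have hax : ∀ i, a i ⬝ᵥ x ≤ 0 := fun i => by rw [hrep]; exact hFle _ (haC i)
  have hbx := h x hax
  rw [hrep] at hbx
  exact absurd (lt_trans hu0 hub) (not_lt.mpr hbx)

/-- Extend a vector by one coordinate. -/
def ext1 (u : ι → ℝ) (α : ℝ) : Option ι → ℝ := fun o => o.elim α u

lemma ext1_dot (u x : ι → ℝ) (α ξ : ℝ) :
    ext1 u α ⬝ᵥ ext1 x ξ = u ⬝ᵥ x + α * ξ := by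
  simp only [dotProduct, ext1, Fintype.sum_option, Option.elim]
  exact add_comm _ _

lemma ext1_eta (z : Option ι → ℝ) : z = ext1 (fun i => z (some i)) (z none) := by
  funext o; cases o <;> rfl

lemma ext1_dot' (u : ι → ℝ) (α : ℝ) (z : Option ι → ℝ) :
    ext1 u α ⬝ᵥ z = u ⬝ᵥ (fun i => z (some i)) + α * z none := by
  conv_lhs => rw [ext1_eta z]
  exact ext1_dot _ _ _ _

/-- Farkas lemma, infeasibility form. -/
theorem farkas_infeasible {k : ℕ} (a : Fin k → (ι → ℝ)) (b : Fin k → ℝ)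
    (h : ¬ ∃ x : ι → ℝ, ∀ i, a i ⬝ᵥ x ≤ b i) :
    ∃ l : Fin k → ℝ, (∀ i, 0 ≤ l i) ∧ ∑ i, l i • a i = 0 ∧ ∑ i, l i * b i < 0 := by
  classical
  set A : Fin (k+1) → (Option ι → ℝ) :=
    fun i => Fin.lastCases (ext1 0 1) (fun j => ext1 (a j) (b j)) i with hA
  have hyp : ∀ z : Option ι → ℝ, (∀ i, A i ⬝ᵥ z ≤ 0) → ext1 0 (-1) ⬝ᵥ z ≤ 0 := by
    intro z hz
    set x : ι → ℝ := fun i => z (some i) with hxdef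
    set ξ : ℝ := z none with hξdef
    have hξ : ξ ≤ 0 := by
      have := hz (Fin.last k)
      rw [hA] at this
      simp only [Fin.lastCases_last] at this
      rw [ext1_dot' 0 1 z] at this
      simpa using this
    have hcon : ∀ j : Fin k, a j ⬝ᵥ x + b j * ξ ≤ 0 := by
      intro j
      have := hz j.castSucc
      rw [hA] at this
      simp only [Fin.lastCases_castSucc] at this
      rwa [ext1_dot' (a j) (b j) z] at this
    rw [ext1_dot' 0 (-1) z]
    simp only [zero_dotProduct, zero_add]
    rcases eq_or_lt_of_le hξ with hξ0 | hξneg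
    · rw [← hξdef, hξ0]; norm_num
    · exfalso
      apply h
      refine ⟨(-ξ)⁻¹ • x, fun j => ?_⟩
      have hd : a j ⬝ᵥ ((-ξ)⁻¹ • x) = (-ξ)⁻¹ * (a j ⬝ᵥ x) := by
        rw [dotProduct_smul]; rfl
      rw [hd]
      have h1 : a j ⬝ᵥ x ≤ b j * (-ξ) := by nlinarith [hcon j]
      have h2 : (0:ℝ) < -ξ := by linarith
      calc (-ξ)⁻¹ * (a j ⬝ᵥ x) ≤ (-ξ)⁻¹ * (b j * (-ξ)) := by
            apply mul_le_mul_of_nonneg_left h1 (by positivity)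
        _ = b j := by
            rw [mul_comm ((-ξ)⁻¹) (b j * (-ξ)), mul_assoc, mul_inv_cancel₀ (ne_of_gt h2), mul_one]
  obtain ⟨c, hc, hrep⟩ := farkas A (ext1 0 (-1)) hyp
  refine ⟨fun j => c j.castSucc, fun j => hc _, ?_, ?_⟩
  · -- some components
    have := congrFun hrep
    have hs : ∀ i : ι, (0:ℝ) = ∑ j : Fin k, c j.castSucc * a j i := by
      intro i
      have h1 := this (some i)
      rw [Finset.sum_apply] at h1
      rw [Fin.sum_univ_castSucc] at h1
      simpa [hA, ext1, Fin.lastCases_castSucc, Fin.lastCases_last] using h1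
    funext i
    rw [Finset.sum_apply]
    simp only [Pi.smul_apply, smul_eq_mul]
    exact (hs i).symm
  · have h1 := congrFun hrep none
    rw [Finset.sum_apply] at h1
    rw [Fin.sum_univ_castSucc] at h1
    simp only [hA, ext1, Fin.lastCases_castSucc, Fin.lastCases_last, Pi.smul_apply,
      smul_eq_mul, Option.elim] at h1
    have : ∑ j : Fin k, c j.castSucc * b j = -1 - c (Fin.last k) := by linarith
    have hlast := hc (Fin.last k)
    rw [this]
    linarith

/-- Farkas lemma, bounded form. -/
theorem farkas_le {k : ℕ} (a : Fin k → (ι → ℝ)) (b : Fin k → ℝ) (c : ι → ℝ) (d : ℝ)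
    (hne : ∃ x : ι → ℝ, ∀ i, a i ⬝ᵥ x ≤ b i)
    (h : ∀ x : ι → ℝ, (∀ i, a i ⬝ᵥ x ≤ b i) → c ⬝ᵥ x ≤ d) :
    ∃ l : Fin k → ℝ, (∀ i, 0 ≤ l i) ∧ c = ∑ i, l i • a i ∧ ∑ i, l i * b i ≤ d := by
  classical
  set A : Fin (k+1) → (Option ι → ℝ) :=
    fun i => Fin.lastCases (ext1 0 1) (fun j => ext1 (a j) (b j)) i with hA
  have hyp : ∀ z : Option ι → ℝ, (∀ i, A i ⬝ᵥ z ≤ 0) → ext1 c d ⬝ᵥ z ≤ 0 := by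
    intro z hz
    set x : ι → ℝ := fun i => z (some i) with hxdef
    set ξ : ℝ := z none with hξdef
    have hξ : ξ ≤ 0 := by
      have := hz (Fin.last k)
      rw [hA] at this
      simp only [Fin.lastCases_last] at this
      rw [ext1_dot' 0 1 z] at this
      simpa using this
    have hcon : ∀ j : Fin k, a j ⬝ᵥ x + b j * ξ ≤ 0 := by
      intro j
      have := hz j.castSucc
      rw [hA] at this
      simp only [Fin.lastCases_castSucc] at this
      rwa [ext1_dot' (a j) (b j) z] at this
    rw [ext1_dot' c d z, ← hxdef, ← hξdef]
    rcases eq_or_lt_of_le hξ with hξ0 | hξneg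
    · -- ξ = 0 : recession direction
      have hax : ∀ j, a j ⬝ᵥ x ≤ 0 := by
        intro j; have h5 := hcon j; rw [hξ0] at h5; linarith
      have hcx : c ⬝ᵥ x ≤ 0 := by
        by_contra hpos
        push_neg at hpos
        obtain ⟨x₀, hx₀⟩ := hne
        set s : ℝ := max 0 ((d - c ⬝ᵥ x₀) / (c ⬝ᵥ x)) + 1 with hs
        have hs0 : 0 ≤ s := by
          rw [hs]
          have := le_max_left 0 ((d - c ⬝ᵥ x₀) / (c ⬝ᵥ x)); linarith
        have hfeas : ∀ j, a j ⬝ᵥ (x₀ + s • x) ≤ b j := by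
          intro j
          rw [dotProduct_add, dotProduct_smul, smul_eq_mul]
          nlinarith [hax j, hx₀ j]
        have hval := h _ hfeas
        rw [dotProduct_add, dotProduct_smul, smul_eq_mul] at hval
        have hgt : (d - c ⬝ᵥ x₀) / (c ⬝ᵥ x) < s := by
          rw [hs]
          have := le_max_right 0 ((d - c ⬝ᵥ x₀) / (c ⬝ᵥ x)); linarith
        rw [div_lt_iff₀ hpos] at hgt
        linarith
      rw [hξ0]
      linarith
    · have h2 : (0:ℝ) < -ξ := by linarith
      have hfeas : ∀ j, a j ⬝ᵥ ((-ξ)⁻¹ • x) ≤ b j := by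
        intro j
        have hd : a j ⬝ᵥ ((-ξ)⁻¹ • x) = (-ξ)⁻¹ * (a j ⬝ᵥ x) := by
          rw [dotProduct_smul]; rfl
        rw [hd]
        have h1 : a j ⬝ᵥ x ≤ b j * (-ξ) := by nlinarith [hcon j]
        calc (-ξ)⁻¹ * (a j ⬝ᵥ x) ≤ (-ξ)⁻¹ * (b j * (-ξ)) := by
              apply mul_le_mul_of_nonneg_left h1 (by positivity)
          _ = b j := by
              rw [mul_comm ((-ξ)⁻¹) (b j * (-ξ)), mul_assoc, mul_inv_cancel₀ (ne_of_gt h2), mul_one]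
      have hval := h _ hfeas
      have hd : c ⬝ᵥ ((-ξ)⁻¹ • x) = (-ξ)⁻¹ * (c ⬝ᵥ x) := by
        rw [dotProduct_smul]; rfl
      rw [hd] at hval
      have : c ⬝ᵥ x ≤ d * (-ξ) := by
        have := mul_le_mul_of_nonneg_left hval h2.le
        rw [← mul_assoc, mul_inv_cancel₀ (ne_of_gt h2), one_mul] at this
        linarith [this]
      nlinarith
  obtain ⟨C, hC, hrep⟩ := farkas A (ext1 c d) hyp
  refine ⟨fun j => C j.castSucc, fun j => hC _, ?_, ?_⟩
  · funext i
    have h1 := congrFun hrep (some i)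
    rw [Finset.sum_apply] at h1
    rw [Fin.sum_univ_castSucc] at h1
    simp only [hA, ext1, Fin.lastCases_castSucc, Fin.lastCases_last, Pi.smul_apply,
      smul_eq_mul, Option.elim, Pi.zero_apply, mul_zero, add_zero] at h1
    rw [Finset.sum_apply]
    simpa [ext1] using h1
  · have h1 := congrFun hrep none
    rw [Finset.sum_apply] at h1
    rw [Fin.sum_univ_castSucc] at h1
    simp only [hA, ext1, Fin.lastCases_castSucc, Fin.lastCases_last, Pi.smul_apply,
      smul_eq_mul, Option.elim] at h1
    have hlast := hC (Fin.last k)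
    have : ∑ j : Fin k, C j.castSucc * b j = d - C (Fin.last k) := by linarith
    rw [this]
    linarith


/-- Farkas infeasibility with arbitrary fintype index. -/
theorem farkas_infeasible' (a : κ → (ι → ℝ)) (b : κ → ℝ)
    (h : ¬ ∃ x : ι → ℝ, ∀ i, a i ⬝ᵥ x ≤ b i) :
    ∃ l : κ → ℝ, (∀ i, 0 ≤ l i) ∧ ∑ i, l i • a i = 0 ∧ ∑ i, l i * b i < 0 := by
  classical
  set e := Fintype.equivFin κ with he
  obtain ⟨l, hl0, hlA, hlb⟩ := farkas_infeasible (fun j => a (e.symm j)) (fun j => b (e.symm j))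
    (by
      intro ⟨x, hx⟩
      exact h ⟨x, fun i => by simpa using hx (e i)⟩)
  refine ⟨fun i => l (e i), fun i => hl0 _, ?_, ?_⟩
  · rw [← hlA]
    exact Fintype.sum_equiv e _ _ (fun i => by simp)
  · rw [show ∑ i, l (e i) * b i = ∑ j, l j * b (e.symm j) from
      Fintype.sum_equiv e _ _ (fun i => by simp)]
    exact hlb

/-- Farkas bounded form with arbitrary fintype index. -/
theorem farkas_le' (a : κ → (ι → ℝ)) (b : κ → ℝ) (c : ι → ℝ) (d : ℝ)
    (hne : ∃ x : ι → ℝ, ∀ i, a i ⬝ᵥ x ≤ b i)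
    (h : ∀ x : ι → ℝ, (∀ i, a i ⬝ᵥ x ≤ b i) → c ⬝ᵥ x ≤ d) :
    ∃ l : κ → ℝ, (∀ i, 0 ≤ l i) ∧ c = ∑ i, l i • a i ∧ ∑ i, l i * b i ≤ d := by
  classical
  set e := Fintype.equivFin κ with he
  obtain ⟨l, hl0, hlA, hlb⟩ := farkas_le (fun j => a (e.symm j)) (fun j => b (e.symm j)) c d
    (by obtain ⟨x, hx⟩ := hne; exact ⟨x, fun j => hx (e.symm j)⟩)
    (fun x hx => h x (fun i => by simpa using hx (e i)))
  refine ⟨fun i => l (e i), fun i => hl0 _, ?_, ?_⟩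
  · rw [hlA]
    exact (Fintype.sum_equiv e _ _ (fun i => by simp)).symm
  · rw [show ∑ i, l (e i) * b i = ∑ j, l j * b (e.symm j) from
      Fintype.sum_equiv e _ _ (fun i => by simp)]
    exact hlb



lemma sum_smul_dot {c : κ → ℝ} {v : κ → (ι → ℝ)} (x : ι → ℝ) :
    (∑ i, c i • v i) ⬝ᵥ x = ∑ i, c i * (v i ⬝ᵥ x) := by
  simp only [dotProduct, Finset.sum_apply, Pi.smul_apply, smul_eq_mul,
    Finset.sum_mul, Finset.mul_sum]
  rw [Finset.sum_comm]
  exact Finset.sum_congr rfl fun i _ => Finset.sum_congr rfl fun j _ => by ring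

/-- Every submodule of `ι → ℝ` is an intersection of kernels of finitely many dot-functionals. -/
lemma submodule_kernels (V : Submodule ℝ (ι → ℝ)) :
    ∃ (r : ℕ) (e : Fin r → (ι → ℝ)), ∀ z : ι → ℝ, z ∈ V ↔ ∀ j, e j ⬝ᵥ z = 0 := by
  classical
  set W := V.dualAnnihilator with hW
  haveI : FiniteDimensional ℝ (Module.Dual ℝ (ι → ℝ)) := inferInstance
  haveI : FiniteDimensional ℝ W := inferInstance
  haveI := Module.Free.of_divisionRing (K := ℝ) (V := ↥W)
  set B := Module.finBasis ℝ W with hB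
  refine ⟨_, fun j => (fun i => ((B j : Module.Dual ℝ (ι → ℝ)) (Pi.single i 1))), fun z => ?_⟩
  have hrep : ∀ j, (fun i => ((B j : Module.Dual ℝ (ι → ℝ)) (Pi.single i 1))) ⬝ᵥ z
      = (B j : Module.Dual ℝ (ι → ℝ)) z := by
    intro j
    rw [dotProduct_comm]
    exact dot_rep _ _
  constructor
  · intro hz j
    rw [hrep]
    exact (Submodule.mem_dualAnnihilator _).mp (B j).2 z hz
  · intro hz
    rw [← Subspace.dualAnnihilator_dualCoannihilator_eq (W := V)]
    rw [Submodule.mem_dualCoannihilator]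
    intro φ hφ
    have hφW : (⟨φ, hφ⟩ : W) = ∑ j, B.repr ⟨φ, hφ⟩ j • B j := by
      conv_lhs => rw [← B.sum_repr ⟨φ, hφ⟩]
    have hφe : φ = ∑ j, B.repr ⟨φ, hφ⟩ j • (B j : Module.Dual ℝ (ι → ℝ)) := by
      have := congrArg (Subtype.val) hφW
      rw [Submodule.coe_sum] at this
      simpa only [Submodule.coe_smul] using this
    rw [hφe]
    simp only [LinearMap.coe_sum, Finset.sum_apply, LinearMap.smul_apply, smul_eq_mul]
    refine Finset.sum_eq_zero fun j _ => ?_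
    have := hz j
    rw [hrep] at this
    rw [this, mul_zero]

/-- Attainment for min of max of affine functions over a nonempty polyhedron bounded below. -/
lemma fd_attain {m : ℕ} (A : κ → (ι → ℝ)) (b : κ → ℝ)
    (w : Fin (m+1) → (ι → ℝ)) (β : Fin (m+1) → ℝ)
    (t₁ : ι → ℝ) (ht₁ : ∀ i, A i ⬝ᵥ t₁ ≤ b i)
    (γ₀ : ℝ)
    (hlb : ∀ t : ι → ℝ, (∀ i, A i ⬝ᵥ t ≤ b i) →
      γ₀ ≤ Finset.univ.sup' Finset.univ_nonempty (fun j => w j ⬝ᵥ t + β j)) :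
    ∃ tbar : ι → ℝ, (∀ i, A i ⬝ᵥ tbar ≤ b i) ∧
      ∀ t : ι → ℝ, (∀ i, A i ⬝ᵥ t ≤ b i) →
        Finset.univ.sup' Finset.univ_nonempty (fun j => w j ⬝ᵥ tbar + β j)
          ≤ Finset.univ.sup' Finset.univ_nonempty (fun j => w j ⬝ᵥ t + β j) := by
  classical
  set h : (ι → ℝ) → ℝ := fun t => Finset.univ.sup' Finset.univ_nonempty
    (fun j => w j ⬝ᵥ t + β j) with hh
  set P : Set (ι → ℝ) := {t | ∀ i, A i ⬝ᵥ t ≤ b i} with hP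
  have hPne : t₁ ∈ P := ht₁
  set γ : ℝ := sInf (h '' P) with hγ
  have hbdd : BddBelow (h '' P) := ⟨γ₀, by rintro y ⟨t, ht, rfl⟩; exact hlb t ht⟩
  have himgne : (h '' P).Nonempty := ⟨h t₁, ⟨t₁, hPne, rfl⟩⟩
  have hγle : ∀ t ∈ P, γ ≤ h t := fun t ht => csInf_le hbdd ⟨t, ht, rfl⟩
  by_cases hfeas : ∃ t : ι → ℝ, ∀ i : κ ⊕ Fin (m+1),
      Sum.elim A w i ⬝ᵥ t ≤ Sum.elim b (fun j => γ - β j) i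
  · obtain ⟨tbar, htbar⟩ := hfeas
    have h1 : ∀ i, A i ⬝ᵥ tbar ≤ b i := fun i => htbar (Sum.inl i)
    have h2 : h tbar ≤ γ := by
      rw [hh]
      apply Finset.sup'_le
      intro j _
      have := htbar (Sum.inr j)
      simp only [Sum.elim_inr] at this
      linarith
    exact ⟨tbar, h1, fun t ht => le_trans h2 (hγle t ht)⟩
  · exfalso
    obtain ⟨l, hl0, hlA, hlb'⟩ :=
      farkas_infeasible' (Sum.elim A w) (Sum.elim b (fun j => γ - β j)) hfeas
    rw [Fintype.sum_sum_type] at hlA hlb'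
    simp only [Sum.elim_inl, Sum.elim_inr] at hlA hlb'
    set s : ℝ := ∑ j, l (Sum.inr j) with hs
    have hs0 : 0 ≤ s := Finset.sum_nonneg fun j _ => hl0 _
    -- key pointwise inequality for t ∈ P
    have hkey : ∀ t ∈ P, 0 ≤ (∑ i, l (Sum.inl i) * b i) + s * h t - ∑ j, l (Sum.inr j) * β j := by
      intro t ht
      have h0 : (0:ℝ) = ∑ i, l (Sum.inl i) * (A i ⬝ᵥ t) + ∑ j, l (Sum.inr j) * (w j ⬝ᵥ t) := by
        have := congrArg (fun v => v ⬝ᵥ t) hlA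
        simp only [zero_dotProduct] at this
        rw [add_dotProduct, sum_smul_dot, sum_smul_dot] at this
        linarith [this]
      have hA : ∑ i, l (Sum.inl i) * (A i ⬝ᵥ t) ≤ ∑ i, l (Sum.inl i) * b i :=
        Finset.sum_le_sum fun i _ => mul_le_mul_of_nonneg_left (ht i) (hl0 _)
      have hw : ∑ j, l (Sum.inr j) * (w j ⬝ᵥ t) ≤ s * h t - ∑ j, l (Sum.inr j) * β j := by
        have : ∀ j : Fin (m+1), l (Sum.inr j) * (w j ⬝ᵥ t)
            ≤ l (Sum.inr j) * h t - l (Sum.inr j) * β j := by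
          intro j
          have hj : w j ⬝ᵥ t + β j ≤ h t :=
            Finset.le_sup' (fun j => w j ⬝ᵥ t + β j) (Finset.mem_univ j)
          nlinarith [hl0 (Sum.inr j)]
        calc ∑ j, l (Sum.inr j) * (w j ⬝ᵥ t)
            ≤ ∑ j, (l (Sum.inr j) * h t - l (Sum.inr j) * β j) := Finset.sum_le_sum fun j _ => this j
          _ = s * h t - ∑ j, l (Sum.inr j) * β j := by
              rw [Finset.sum_sub_distrib, ← Finset.sum_mul, hs]
      linarith
    have hexp : ∑ j, l (Sum.inr j) * (γ - β j)
        = (∑ j, l (Sum.inr j)) * γ - ∑ j, l (Sum.inr j) * β j := by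
      rw [Finset.sum_mul, ← Finset.sum_sub_distrib]
      exact Finset.sum_congr rfl fun j _ => by ring
    rcases eq_or_lt_of_le hs0 with hseq | hspos
    · -- s = 0
      have hz : ∀ j, l (Sum.inr j) = 0 := by
        intro j
        have := (Finset.sum_eq_zero_iff_of_nonneg
          (fun j _ => hl0 (Sum.inr j))).mp hseq.symm
        exact this j (Finset.mem_univ j)
      have h2 : ∑ j, l (Sum.inr j) * β j = 0 :=
        Finset.sum_eq_zero fun j _ => by rw [hz j, zero_mul]
      have h3 : s * h t₁ = 0 := by rw [← hseq, zero_mul]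
      have h5 : s * γ = 0 := by rw [← hseq, zero_mul]
      have h4 := hkey t₁ hPne
      rw [← hs] at hexp
      linarith [hlb', hexp, h2, h3, h4, h5]
    · -- s > 0
      have hγ' : ∀ t ∈ P, (∑ j, l (Sum.inr j) * β j - ∑ i, l (Sum.inl i) * b i) / s ≤ h t := by
        intro t ht
        rw [div_le_iff₀ hspos]
        have := hkey t ht
        nlinarith
      have hγγ : (∑ j, l (Sum.inr j) * β j - ∑ i, l (Sum.inl i) * b i) / s ≤ γ := by
        apply le_csInf himgne
        rintro y ⟨t, ht, rfl⟩
        exact hγ' t ht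
      rw [div_le_iff₀ hspos] at hγγ
      rw [← hs] at hexp
      nlinarith [hlb', hexp, hγγ]

/-- Dual multipliers for an attained minimum. -/
lemma fd_dual {m : ℕ} (A : κ → (ι → ℝ)) (b : κ → ℝ)
    (w : Fin (m+1) → (ι → ℝ)) (β : Fin (m+1) → ℝ)
    (tbar : ι → ℝ) (htbar : ∀ i, A i ⬝ᵥ tbar ≤ b i)
    (hmin : ∀ t : ι → ℝ, (∀ i, A i ⬝ᵥ t ≤ b i) →
      Finset.univ.sup' Finset.univ_nonempty (fun j => w j ⬝ᵥ tbar + β j)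
        ≤ Finset.univ.sup' Finset.univ_nonempty (fun j => w j ⬝ᵥ t + β j)) :
    ∃ (l : κ → ℝ) (μ : Fin (m+1) → ℝ), (∀ i, 0 ≤ l i) ∧ (∀ j, 0 ≤ μ j) ∧ (∑ j, μ j = 1) ∧
      (∑ i, l i • A i) + (∑ j, μ j • w j) = 0 ∧
      ∑ i, l i * b i - ∑ j, μ j * β j
        ≤ -(Finset.univ.sup' Finset.univ_nonempty (fun j => w j ⬝ᵥ tbar + β j)) := by
  classical
  set h : (ι → ℝ) → ℝ := fun t => Finset.univ.sup' Finset.univ_nonempty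
    (fun j => w j ⬝ᵥ t + β j) with hh
  set AA : κ ⊕ Fin (m+1) → (Option ι → ℝ) :=
    Sum.elim (fun i => ext1 (A i) 0) (fun j => ext1 (w j) (-1)) with hAA
  set bb : κ ⊕ Fin (m+1) → ℝ := Sum.elim b (fun j => -β j) with hbb
  have hne : ∃ z : Option ι → ℝ, ∀ i, AA i ⬝ᵥ z ≤ bb i := by
    refine ⟨ext1 tbar (h tbar), ?_⟩
    rintro (i | j)
    · rw [hAA]
      simp only [Sum.elim_inl]
      rw [ext1_dot']
      simp only [ext1, Option.elim, zero_mul, add_zero]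
      exact htbar i
    · rw [hAA]
      simp only [Sum.elim_inr]
      rw [ext1_dot']
      simp only [ext1, Option.elim]
      have : w j ⬝ᵥ tbar + β j ≤ h tbar :=
        Finset.le_sup' (fun j => w j ⬝ᵥ tbar + β j) (Finset.mem_univ j)
      simp only [hbb, Sum.elim_inr]
      linarith
  have himp : ∀ z : Option ι → ℝ, (∀ i, AA i ⬝ᵥ z ≤ bb i) → ext1 0 (-1) ⬝ᵥ z ≤ -(h tbar) := by
    intro z hz
    set x : ι → ℝ := fun i => z (some i) with hx
    set σ : ℝ := z none with hσ
    have hxP : ∀ i, A i ⬝ᵥ x ≤ b i := by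
      intro i
      have := hz (Sum.inl i)
      rw [hAA] at this
      simp only [Sum.elim_inl] at this
      rw [ext1_dot'] at this
      simp only [zero_mul, add_zero] at this
      simpa [hbb] using this
    have hσx : h x ≤ σ := by
      rw [hh]
      apply Finset.sup'_le
      intro j _
      have := hz (Sum.inr j)
      rw [hAA] at this
      simp only [Sum.elim_inr] at this
      rw [ext1_dot'] at this
      simp only [hbb, Sum.elim_inr] at this
      linarith
    rw [ext1_dot']
    simp only [zero_dotProduct]
    have hmin' : h tbar ≤ h x := hmin x hxP
    have hσ' : σ = z none := hσ
    linarith [hσx, hmin', hσ'.le, hσ'.ge]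
  obtain ⟨C, hC0, hCrep, hCb⟩ := farkas_le' AA bb (ext1 0 (-1)) (-(h tbar)) hne himp
  refine ⟨fun i => C (Sum.inl i), fun j => C (Sum.inr j), fun i => hC0 _, fun j => hC0 _, ?_, ?_, ?_⟩
  · -- sum of μ = 1
    have h1 := congrFun hCrep none
    rw [Fintype.sum_sum_type] at h1
    simp only [Finset.sum_apply, Pi.add_apply] at h1
    simp only [hAA, Sum.elim_inl, Sum.elim_inr, Pi.smul_apply, smul_eq_mul, ext1,
      Option.elim] at h1
    simp only [mul_zero, Finset.sum_const_zero, zero_add, mul_neg, mul_one] at h1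
    have : (-1 : ℝ) = -∑ j, C (Sum.inr j) := by
      rw [← Finset.sum_neg_distrib]
      simpa [ext1] using h1
    linarith [this]
  · -- stationarity
    funext i
    have h1 := congrFun hCrep (some i)
    rw [Fintype.sum_sum_type] at h1
    simp only [Finset.sum_apply, Pi.add_apply] at h1
    simp only [hAA, Sum.elim_inl, Sum.elim_inr, Pi.smul_apply, smul_eq_mul, ext1,
      Option.elim] at h1
    simp only [Pi.add_apply, Pi.zero_apply, Finset.sum_apply, Pi.smul_apply, smul_eq_mul]
    simpa [ext1] using h1.symm
  · -- bound
    rw [Fintype.sum_sum_type] at hCb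
    simp only [hbb, Sum.elim_inl, Sum.elim_inr] at hCb
    have hhe : Finset.univ.sup' Finset.univ_nonempty (fun j => w j ⬝ᵥ tbar + β j) = h tbar := rfl
    have hneg : ∑ j, C (Sum.inr j) * (-β j) = -∑ j, C (Sum.inr j) * β j := by
      rw [← Finset.sum_neg_distrib]
      exact Finset.sum_congr rfl fun j _ => by ring
    rw [hhe]
    linarith [hCb, hneg]



set_option maxHeartbeats 1000000 in
theorem master
    {X : Type*}
    [AddCommGroup X] [Module ℝ X] [TopologicalSpace X] [IsTopologicalAddGroup X]
    [ContinuousSMul ℝ X]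
    (D domf : Set X) (hDne : D.Nonempty) (hdomne : domf.Nonempty)
    (m : ℕ) (v : Fin (m + 1) → X →L[ℝ] ℝ) (β : Fin (m + 1) → ℝ)
    (f : X → EReal)
    (hf : ∀ x ∈ domf,
      f x = ((Finset.univ.sup' Finset.univ_nonempty fun k => v k x + β k : ℝ) : EReal))
    (hf' : ∀ x ∉ domf, f x = ⊤)
    (g : (X →L[ℝ] ℝ) → EReal)
    (hg : ∀ φ : X →L[ℝ] ℝ,
      g φ = -(⨆ x : X, ((((-φ) x : ℝ) : EReal) - f x)) - ⨆ x ∈ D, ((φ x : ℝ) : EReal))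
    (F : ι → X →L[ℝ] ℝ) (o : Fin (m+1) → ι) (hvo : ∀ k, v k = F (o k))
    {κD κf : Type} [Fintype κD] [DecidableEq κD] [Fintype κf] [DecidableEq κf]
    (AD : κD → (ι → ℝ)) (bD : κD → ℝ) (Af : κf → (ι → ℝ)) (bf : κf → ℝ)
    (h1 : ∀ x ∈ D, ∀ i, AD i ⬝ᵥ (fun r => F r x) ≤ bD i)
    (h2 : ∀ x ∈ domf, ∀ j, Af j ⬝ᵥ (fun r => F r x) ≤ bf j)
    (h3 : ∀ t : ι → ℝ, (∀ i, AD i ⬝ᵥ t ≤ bD i) → (∀ j, Af j ⬝ᵥ t ≤ bf j) →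
       ∃ x, x ∈ D ∧ x ∈ domf ∧ (fun r => F r x) = t)
    (hsol : (∃ u, u ∈ D ∧ f u ≠ ⊤ ∧ f u ≠ ⊥ ∧ ∀ x ∈ D, f u ≤ f x) ∨
      (∃ φ : X →L[ℝ] ℝ, g φ ≠ ⊤ ∧ g φ ≠ ⊥ ∧ ∀ ψ : X →L[ℝ] ℝ, g ψ ≤ g φ)) :
    (∃ u, u ∈ D ∧ f u ≠ ⊤ ∧ f u ≠ ⊥ ∧ ∀ x ∈ D, f u ≤ f x) ∧
      (∃ φ : X →L[ℝ] ℝ, g φ ≠ ⊤ ∧ g φ ≠ ⊥ ∧ ∀ ψ : X →L[ℝ] ℝ, g ψ ≤ g φ) ∧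
      (⨅ x ∈ D, f x) = ⨆ ψ : X →L[ℝ] ℝ, g ψ := by
  classical
  set T : X → (ι → ℝ) := fun x r => F r x with hT
  set fr : X → ℝ :=
    fun x => Finset.univ.sup' Finset.univ_nonempty (fun k => v k x + β k) with hfr
  set w : Fin (m+1) → (ι → ℝ) := fun k => Pi.single (o k) (1:ℝ) with hw
  have hwT : ∀ (x : X) (k : Fin (m+1)), w k ⬝ᵥ T x = v k x := by
    intro x k
    rw [hw]
    rw [single_dotProduct, one_mul]
    rw [hvo k]
  have hhT : ∀ x : X,
      Finset.univ.sup' Finset.univ_nonempty (fun k => w k ⬝ᵥ T x + β k) = fr x := by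
    intro x
    have : (fun k => w k ⬝ᵥ T x + β k) = fun k => v k x + β k := by
      funext k; rw [hwT]
    rw [this]
  -- the continuous linear map associated with a coefficient vector
  set Φ : (ι → ℝ) → (X →L[ℝ] ℝ) := fun c => ∑ r, c r • F r with hΦdef
  have hΦ : ∀ (c : ι → ℝ) (x : X), (Φ c) x = c ⬝ᵥ T x := by
    intro c x
    rw [hΦdef]
    simp only [ContinuousLinearMap.coe_sum', Finset.sum_apply,
      ContinuousLinearMap.coe_smul', Pi.smul_apply, smul_eq_mul]
    rfl
  have hfrx : ∀ (x : X), x ∈ domf → f x = ((fr x : ℝ) : EReal) := fun x hx => hf x hx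
  have htermgen : ∀ (ψ : X →L[ℝ] ℝ) (x : X), x ∈ domf →
      ((((-ψ) x : ℝ) : EReal) - f x) = ((-(ψ x) - fr x : ℝ) : EReal) := by
    intro ψ x hx
    rw [hfrx x hx, show ((-ψ) x : ℝ) = -(ψ x) from rfl, EReal.coe_sub, EReal.coe_neg]
  -- combined constraint system
  set A : κD ⊕ κf → (ι → ℝ) := Sum.elim AD Af with hA
  set b : κD ⊕ κf → ℝ := Sum.elim bD bf with hb
  have hfeasT : ∀ x, x ∈ D → x ∈ domf → ∀ i, A i ⬝ᵥ T x ≤ b i := by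
    rintro x hxD hxf (i | j)
    · exact h1 x hxD i
    · exact h2 x hxf j
  -- weak duality
  have weak : ∀ (ψ : X →L[ℝ] ℝ) (x : X), x ∈ D → g ψ ≤ f x := by
    intro ψ x hx
    by_cases hxf : x ∈ domf
    · rw [hg ψ, hfrx x hxf]
      have hS1 : (((-ψ) x : ℝ) : EReal) - f x ≤ ⨆ y : X, ((((-ψ) y : ℝ) : EReal) - f y) :=
        le_iSup (fun y => ((((-ψ) y : ℝ) : EReal) - f y)) x
      have hS2 : ((ψ x : ℝ) : EReal) ≤ ⨆ y ∈ D, ((ψ y : ℝ) : EReal) :=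
        le_iSup₂ (f := fun y (_ : y ∈ D) => ((ψ y : ℝ) : EReal)) x hx
      have hterm : (((-ψ) x : ℝ) : EReal) - f x = ((-(ψ x) - fr x : ℝ) : EReal) :=
        htermgen ψ x hxf
      calc -(⨆ y : X, ((((-ψ) y : ℝ) : EReal) - f y)) - ⨆ y ∈ D, ((ψ y : ℝ) : EReal)
          ≤ -(((-(ψ x) - fr x : ℝ) : EReal)) - ((ψ x : ℝ) : EReal) := by
            apply EReal.sub_le_sub _ hS2
            rw [EReal.neg_le_neg_iff]
            rw [← hterm]
            exact hS1
        _ = ((fr x : ℝ) : EReal) := by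
            rw [← EReal.coe_neg, ← EReal.coe_sub]
            norm_num
    · rw [hf' x hxf]
      exact le_top
  -- the common tail: given a primal solution in D ∩ domf, build everything
  have tail : ∀ u, u ∈ D → u ∈ domf → (∀ x ∈ D, f u ≤ f x) →
      (∃ u, u ∈ D ∧ f u ≠ ⊤ ∧ f u ≠ ⊥ ∧ ∀ x ∈ D, f u ≤ f x) ∧
      (∃ φ : X →L[ℝ] ℝ, g φ ≠ ⊤ ∧ g φ ≠ ⊥ ∧ ∀ ψ : X →L[ℝ] ℝ, g ψ ≤ g φ) ∧
      (⨅ x ∈ D, f x) = ⨆ ψ : X →L[ℝ] ℝ, g ψ := by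
    intro u huD hudom hmin
    set γ : ℝ := fr u with hγ
    have hfu : f u = ((γ : ℝ) : EReal) := hfrx u hudom
    -- FD minimality of T u
    have hminfd : ∀ t : ι → ℝ, (∀ i, A i ⬝ᵥ t ≤ b i) →
        Finset.univ.sup' Finset.univ_nonempty (fun j => w j ⬝ᵥ (T u) + β j)
          ≤ Finset.univ.sup' Finset.univ_nonempty (fun j => w j ⬝ᵥ t + β j) := by
      intro t ht
      obtain ⟨x, hxD, hxf, hxt⟩ := h3 t (fun i => ht (Sum.inl i)) (fun j => ht (Sum.inr j))
      have hTx : T x = t := hxt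
      rw [hhT u, ← hTx, hhT x]
      have := hmin x hxD
      rw [hfu, hfrx x hxf] at this
      exact EReal.coe_le_coe_iff.mp this
    obtain ⟨l, μ, hl0, hμ0, hμ1, hstat, hbound⟩ :=
      fd_dual A b w β (T u) (hfeasT u huD hudom) hminfd
    rw [hhT u, ← hγ] at hbound
    -- split multipliers
    rw [Fintype.sum_sum_type] at hstat hbound
    simp only [hA, hb, Sum.elim_inl, Sum.elim_inr] at hstat hbound
    set c' : ι → ℝ := ∑ i, l (Sum.inl i) • AD i with hc'
    set φ : X →L[ℝ] ℝ := Φ c' with hφ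
    set BD : ℝ := ∑ i, l (Sum.inl i) * bD i with hBD
    set Bf : ℝ := ∑ j, l (Sum.inr j) * bf j - ∑ k, μ k * β k with hBf
    have hstat' : (∑ i, l (Sum.inl i) • AD i)
        + ((∑ j, l (Sum.inr j) • Af j) + (∑ k, μ k • w k)) = 0 := by
      rw [← add_assoc]; exact hstat
    have hcs : c' = -((∑ j, l (Sum.inr j) • Af j) + (∑ k, μ k • w k)) :=
      eq_neg_of_add_eq_zero_left hstat'
    have hst : ∀ t : ι → ℝ, -(c' ⬝ᵥ t)
        = ∑ j, l (Sum.inr j) * (Af j ⬝ᵥ t) + ∑ k, μ k * (w k ⬝ᵥ t) := by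
      intro t
      rw [hcs, neg_dotProduct, neg_neg, add_dotProduct,
        sum_smul_dot, sum_smul_dot]
    have hbound1 : ∀ x ∈ D, φ x ≤ BD := by
      intro x hx
      rw [hφ, hΦ, hc', sum_smul_dot, hBD]
      exact Finset.sum_le_sum fun i _ =>
        mul_le_mul_of_nonneg_left (h1 x hx i) (hl0 (Sum.inl i))
    have hbound2 : ∀ x ∈ domf, -(φ x) - fr x ≤ Bf := by
      intro x hx
      rw [hφ, hΦ]
      rw [hst (T x)]
      have hAf : ∑ j, l (Sum.inr j) * (Af j ⬝ᵥ T x) ≤ ∑ j, l (Sum.inr j) * bf j :=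
        Finset.sum_le_sum fun j _ =>
          mul_le_mul_of_nonneg_left (h2 x hx j) (hl0 (Sum.inr j))
      have hμv : ∑ k, μ k * (w k ⬝ᵥ T x) ≤ fr x - ∑ k, μ k * β k := by
        have hle : ∀ k : Fin (m+1), μ k * (w k ⬝ᵥ T x) ≤ μ k * fr x - μ k * β k := by
          intro k
          rw [hwT x k]
          have : v k x + β k ≤ fr x := by
            rw [hfr]
            exact Finset.le_sup' (fun k => v k x + β k) (Finset.mem_univ k)
          nlinarith [hμ0 k]
        calc ∑ k, μ k * (w k ⬝ᵥ T x) ≤ ∑ k, (μ k * fr x - μ k * β k) :=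
              Finset.sum_le_sum fun k _ => hle k
          _ = fr x - ∑ k, μ k * β k := by
              rw [Finset.sum_sub_distrib, ← Finset.sum_mul, hμ1, one_mul]
      rw [hBf]
      linarith
    have hBsum : BD + Bf ≤ -γ := by
      rw [hBD, hBf]
      linarith [hbound]
    -- compute g φ
    set S2 : EReal := ⨆ x ∈ D, ((φ x : ℝ) : EReal) with hS2
    have hS2ub : S2 ≤ ((BD : ℝ) : EReal) :=
      iSup₂_le fun x hx => EReal.coe_le_coe_iff.mpr (hbound1 x hx)
    have hS2lb : ((φ u : ℝ) : EReal) ≤ S2 :=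
      le_iSup₂ (f := fun y (_ : y ∈ D) => ((φ y : ℝ) : EReal)) u huD
    obtain ⟨rS2, hrS2⟩ : ∃ r : ℝ, S2 = (r : EReal) :=
      ⟨S2.toReal, (EReal.coe_toReal
        (lt_of_le_of_lt hS2ub (EReal.coe_lt_top BD)).ne
        (lt_of_lt_of_le (EReal.bot_lt_coe (φ u)) hS2lb).ne').symm⟩
    set S1 : EReal := ⨆ x : X, ((((-φ) x : ℝ) : EReal) - f x) with hS1
    have hterm : ∀ x ∈ domf, ((((-φ) x : ℝ) : EReal) - f x)
        = ((-(φ x) - fr x : ℝ) : EReal) := fun x hx => htermgen φ x hx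
    have hS1ub : S1 ≤ ((Bf : ℝ) : EReal) := by
      apply iSup_le
      intro x
      by_cases hx : x ∈ domf
      · rw [hterm x hx]
        exact EReal.coe_le_coe_iff.mpr (hbound2 x hx)
      · rw [hf' x hx]
        rw [EReal.sub_top]
        exact bot_le
    have hS1lb : ((-(φ u) - fr u : ℝ) : EReal) ≤ S1 := by
      rw [← hterm u hudom]
      exact le_iSup (fun y => ((((-φ) y : ℝ) : EReal) - f y)) u
    obtain ⟨rS1, hrS1⟩ : ∃ r : ℝ, S1 = (r : EReal) :=
      ⟨S1.toReal, (EReal.coe_toReal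
        (lt_of_le_of_lt hS1ub (EReal.coe_lt_top Bf)).ne
        (lt_of_lt_of_le (EReal.bot_lt_coe _) hS1lb).ne').symm⟩
    have hgφ : g φ = ((-rS1 - rS2 : ℝ) : EReal) := by
      rw [hg φ, ← hS1, ← hS2, hrS1, hrS2, ← EReal.coe_neg, ← EReal.coe_sub]
    have hineq1 : rS1 ≤ Bf := EReal.coe_le_coe_iff.mp (hrS1 ▸ hS1ub)
    have hineq2 : rS2 ≤ BD := EReal.coe_le_coe_iff.mp (hrS2 ▸ hS2ub)
    have hgeq : g φ = ((γ : ℝ) : EReal) := by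
      have hle' : g φ ≤ ((γ : ℝ) : EReal) := hfu ▸ weak φ u huD
      have hge' : ((γ : ℝ) : EReal) ≤ g φ := by
        rw [hgφ]
        exact EReal.coe_le_coe_iff.mpr (by linarith)
      exact le_antisymm hle' hge'
    refine ⟨⟨u, huD, by rw [hfu]; exact EReal.coe_ne_top γ,
        by rw [hfu]; exact EReal.coe_ne_bot γ, hmin⟩,
      ⟨φ, by rw [hgeq]; exact EReal.coe_ne_top γ,
        by rw [hgeq]; exact EReal.coe_ne_bot γ,
        fun ψ => le_trans (weak ψ u huD) (by rw [hfu, ← hgeq])⟩, ?_⟩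
    have hinf : (⨅ x ∈ D, f x) = ((γ : ℝ) : EReal) := by
      apply le_antisymm
      · exact le_trans (iInf₂_le u huD) (le_of_eq hfu)
      · exact le_iInf₂ fun x hx => hfu ▸ hmin x hx
    have hsup : (⨆ ψ : X →L[ℝ] ℝ, g ψ) = ((γ : ℝ) : EReal) := by
      apply le_antisymm
      · exact iSup_le fun ψ => le_trans (weak ψ u huD) (le_of_eq hfu)
      · rw [← hgeq]
        exact le_iSup (fun ψ => g ψ) φ
    rw [hinf, hsup]
  -- now the case analysis
  rcases hsol with ⟨u, huD, hune, _, hmin⟩ | ⟨φs, hne1, hne2, hmax⟩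
  · have hudom : u ∈ domf := by
      by_contra hx
      exact hune (hf' u hx)
    exact tail u huD hudom hmin
  · -- dual solution exists
    -- extract real values of the two suprema for φs
    obtain ⟨x₀, hx₀⟩ := hDne
    obtain ⟨x₁, hx₁⟩ := hdomne
    set S1 : EReal := ⨆ x : X, ((((-φs) x : ℝ) : EReal) - f x) with hS1
    set S2 : EReal := ⨆ x ∈ D, ((φs x : ℝ) : EReal) with hS2
    have hgs : g φs = -S1 - S2 := hg φs
    have hS1ne_top : S1 ≠ ⊤ := by
      intro h
      rw [h] at hgs
      rw [EReal.neg_top, EReal.bot_sub] at hgs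
      exact hne2 hgs
    have hS2ne_top : S2 ≠ ⊤ := by
      intro h
      rw [h] at hgs
      rw [EReal.sub_top] at hgs
      exact hne2 hgs
    have htermx₁ : ((((-φs) x₁ : ℝ) : EReal) - f x₁) = ((-(φs x₁) - fr x₁ : ℝ) : EReal) :=
      htermgen φs x₁ hx₁
    have hS1lb : ((-(φs x₁) - fr x₁ : ℝ) : EReal) ≤ S1 := by
      rw [← htermx₁]
      exact le_iSup (fun y => ((((-φs) y : ℝ) : EReal) - f y)) x₁
    have hS2lb : ((φs x₀ : ℝ) : EReal) ≤ S2 :=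
      le_iSup₂ (f := fun y (_ : y ∈ D) => ((φs y : ℝ) : EReal)) x₀ hx₀
    obtain ⟨rS1, hrS1⟩ : ∃ r : ℝ, S1 = (r : EReal) :=
      ⟨S1.toReal, (EReal.coe_toReal hS1ne_top
        (lt_of_lt_of_le (EReal.bot_lt_coe _) hS1lb).ne').symm⟩
    obtain ⟨rS2, hrS2⟩ : ∃ r : ℝ, S2 = (r : EReal) :=
      ⟨S2.toReal, (EReal.coe_toReal hS2ne_top
        (lt_of_lt_of_le (EReal.bot_lt_coe _) hS2lb).ne').symm⟩
    have hgsr : g φs = ((-rS1 - rS2 : ℝ) : EReal) := by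
      rw [hgs, hrS1, hrS2, ← EReal.coe_neg, ← EReal.coe_sub]
    set rg : ℝ := -rS1 - rS2 with hrg
    -- pointwise bounds for φs
    have hptf : ∀ x ∈ domf, -(φs x) - fr x ≤ rS1 := by
      intro x hx
      have : ((((-φs) x : ℝ) : EReal) - f x) ≤ S1 :=
        le_iSup (fun y => ((((-φs) y : ℝ) : EReal) - f y)) x
      rw [hrS1] at this
      rw [htermgen φs x hx] at this
      exact EReal.coe_le_coe_iff.mp this
    have hptD : ∀ x ∈ D, φs x ≤ rS2 := by
      intro x hx
      have : ((φs x : ℝ) : EReal) ≤ S2 :=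
        le_iSup₂ (f := fun y (_ : y ∈ D) => ((φs y : ℝ) : EReal)) x hx
      rw [hrS2] at this
      exact EReal.coe_le_coe_iff.mp this
    -- step 1 : D ∩ domf is nonempty
    have hDf : ∃ x, x ∈ D ∧ x ∈ domf := by
      by_contra hno
      push_neg at hno
      have hPempty : ¬ ∃ t : ι → ℝ, ∀ i, A i ⬝ᵥ t ≤ b i := by
        rintro ⟨t, ht⟩
        obtain ⟨x, hxD, hxf, _⟩ := h3 t (fun i => ht (Sum.inl i)) (fun j => ht (Sum.inr j))
        exact hno x hxD hxf
      obtain ⟨l, hl0, hstat, hneg⟩ := farkas_infeasible' A b hPempty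
      rw [Fintype.sum_sum_type] at hstat hneg
      simp only [hA, hb, Sum.elim_inl, Sum.elim_inr] at hstat hneg
      set c' : ι → ℝ := ∑ i, l (Sum.inl i) • AD i with hc'
      set BD : ℝ := ∑ i, l (Sum.inl i) * bD i with hBD
      set Bf : ℝ := ∑ j, l (Sum.inr j) * bf j with hBf
      have hcs : c' = -(∑ j, l (Sum.inr j) • Af j) :=
        eq_neg_of_add_eq_zero_left hstat
      have hst : ∀ t : ι → ℝ, -(c' ⬝ᵥ t) = ∑ j, l (Sum.inr j) * (Af j ⬝ᵥ t) := by
        intro t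
        rw [hcs, neg_dotProduct, neg_neg, sum_smul_dot]
      have hBneg : BD + Bf < 0 := by rw [hBD, hBf]; linarith [hneg]
      have hbound1 : ∀ x ∈ D, (Φ c') x ≤ BD := by
        intro x hx
        rw [hΦ, hc', sum_smul_dot, hBD]
        exact Finset.sum_le_sum fun i _ =>
          mul_le_mul_of_nonneg_left (h1 x hx i) (hl0 (Sum.inl i))
      have hbound2 : ∀ x ∈ domf, -((Φ c') x) ≤ Bf := by
        intro x hx
        rw [hΦ, hst (T x), hBf]
        exact Finset.sum_le_sum fun j _ =>
          mul_le_mul_of_nonneg_left (h2 x hx j) (hl0 (Sum.inr j))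
      -- choose a large s
      set s : ℝ := max 0 ((rg + rS1 + rS2 + 1) / (-(BD + Bf))) with hs
      have hs0 : 0 ≤ s := le_max_left _ _
      have hslarge : rg < -(rS1 + s * Bf) - (rS2 + s * BD) := by
        have h4 : (rg + rS1 + rS2 + 1) / (-(BD + Bf)) ≤ s := le_max_right _ _
        rw [div_le_iff₀ (by linarith : (0:ℝ) < -(BD + Bf))] at h4
        nlinarith
      set ψ : X →L[ℝ] ℝ := φs + s • Φ c' with hψ
      have hψap : ∀ x : X, ψ x = φs x + s * (Φ c') x := by
        intro x
        rw [hψ]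
        simp
      -- bound the two suprema for ψ
      have hS1ψ : (⨆ x : X, ((((-ψ) x : ℝ) : EReal) - f x)) ≤ ((rS1 + s * Bf : ℝ) : EReal) := by
        apply iSup_le
        intro x
        by_cases hx : x ∈ domf
        · rw [htermgen ψ x hx]
          apply EReal.coe_le_coe_iff.mpr
          have e1 := hptf x hx
          have e2 := hbound2 x hx
          have e3 := mul_le_mul_of_nonneg_left e2 hs0
          rw [hψap x]
          nlinarith [e1, e3]
        · rw [hf' x hx, EReal.sub_top]
          exact bot_le
      have hS2ψ : (⨆ x ∈ D, ((ψ x : ℝ) : EReal)) ≤ ((rS2 + s * BD : ℝ) : EReal) := by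
        apply iSup₂_le
        intro x hx
        apply EReal.coe_le_coe_iff.mpr
        have e1 := hptD x hx
        have e2 := hbound1 x hx
        have e3 := mul_le_mul_of_nonneg_left e2 hs0
        rw [hψap x]
        nlinarith [e1, e3]
      have hgψ : ((-(rS1 + s * Bf) - (rS2 + s * BD) : ℝ) : EReal) ≤ g ψ := by
        rw [hg ψ]
        rw [EReal.coe_sub, EReal.coe_neg]
        exact EReal.sub_le_sub (EReal.neg_le_neg_iff.mpr hS1ψ) hS2ψ
      have hcontra := le_trans hgψ (hmax ψ)
      rw [hgsr] at hcontra
      have := EReal.coe_le_coe_iff.mp hcontra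
      linarith
    obtain ⟨x₂, hx₂D, hx₂f⟩ := hDf
    -- step 2 : attainment
    have hlbfd : ∀ t : ι → ℝ, (∀ i, A i ⬝ᵥ t ≤ b i) →
        rg ≤ Finset.univ.sup' Finset.univ_nonempty (fun j => w j ⬝ᵥ t + β j) := by
      intro t ht
      obtain ⟨x, hxD, hxf, hxt⟩ := h3 t (fun i => ht (Sum.inl i)) (fun j => ht (Sum.inr j))
      have hTx : T x = t := hxt
      rw [← hTx, hhT x]
      have := weak φs x hxD
      rw [hgsr, hfrx x hxf] at this
      exact EReal.coe_le_coe_iff.mp this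
    obtain ⟨tbar, htbar, htmin⟩ :=
      fd_attain A b w β (T x₂) (hfeasT x₂ hx₂D hx₂f) rg hlbfd
    obtain ⟨u, huD, huf, hut⟩ := h3 tbar (fun i => htbar (Sum.inl i)) (fun j => htbar (Sum.inr j))
    have hTu : T u = tbar := hut
    have hmin : ∀ x ∈ D, f u ≤ f x := by
      intro x hx
      by_cases hxf : x ∈ domf
      · rw [hfrx u huf, hfrx x hxf]
        apply EReal.coe_le_coe_iff.mpr
        rw [← hTu] at htmin
        have h5 := htmin (T x) (hfeasT x hx hxf)
        rw [hhT u, hhT x] at h5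
        exact h5
      · rw [hf' x hxf]
        exact le_top
    exact tail u huD huf hmin


end SD



/-- A polyhedral convex set: a finite intersection of closed half-spaces (possibly all of `X`). -/
def IsPCS {X : Type*} [AddCommGroup X] [Module ℝ X] [TopologicalSpace X] (S : Set X) : Prop :=
  ∃ (p : ℕ) (xs : Fin p → X →L[ℝ] ℝ) (α : Fin p → ℝ),
    S = {x | ∀ i, xs i x ≤ α i}

/-- **Strong duality theorem I.**  `D` is a nonempty generalized polyhedral convex set and
`f` a proper generalized polyhedral convex function; assume moreover that either `f` is
polyhedral convex (equivalently: `dom f` is a polyhedral convex set) or `D` is polyhedral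
convex.  If one of the problems `(P) : min {f x | x ∈ D}` and
`(D) : max {g φ}` (with `g φ = −f*(−φ) − sup_{x ∈ D} ⟨φ, x⟩`) has a solution, then both
have solutions and their optimal values are equal. -/
theorem strong_duality_I
    {X : Type*}
    [AddCommGroup X] [Module ℝ X] [TopologicalSpace X] [IsTopologicalAddGroup X]
    [ContinuousSMul ℝ X] [LocallyConvexSpace ℝ X] [T2Space X]
    (D : Set X) (hD : IsGPCS D) (hDne : D.Nonempty)
    (domf : Set X) (hdomf : IsGPCS domf) (hdomne : domf.Nonempty)
    (m : ℕ) (v : Fin (m + 1) → X →L[ℝ] ℝ) (β : Fin (m + 1) → ℝ)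
    (f : X → EReal)
    (hf : ∀ x ∈ domf,
      f x = ((Finset.univ.sup' Finset.univ_nonempty fun k => v k x + β k : ℝ) : EReal))
    (hf' : ∀ x ∉ domf, f x = ⊤)
    (hpoly : IsPCS domf ∨ IsPCS D)
    (g : (X →L[ℝ] ℝ) → EReal)
    (hg : ∀ φ : X →L[ℝ] ℝ,
      g φ = -(⨆ x : X, ((((-φ) x : ℝ) : EReal) - f x)) - ⨆ x ∈ D, ((φ x : ℝ) : EReal))
    (hsol : (∃ u, u ∈ D ∧ f u ≠ ⊤ ∧ f u ≠ ⊥ ∧ ∀ x ∈ D, f u ≤ f x) ∨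
      (∃ φ : X →L[ℝ] ℝ, g φ ≠ ⊤ ∧ g φ ≠ ⊥ ∧ ∀ ψ : X →L[ℝ] ℝ, g ψ ≤ g φ)) :
    (∃ u, u ∈ D ∧ f u ≠ ⊤ ∧ f u ≠ ⊥ ∧ ∀ x ∈ D, f u ≤ f x) ∧
      (∃ φ : X →L[ℝ] ℝ, g φ ≠ ⊤ ∧ g φ ≠ ⊥ ∧ ∀ ψ : X →L[ℝ] ℝ, g ψ ≤ g φ) ∧
      (⨅ x ∈ D, f x) = ⨆ ψ : X →L[ℝ] ℝ, g ψ := by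
  classical
  rcases hpoly with ⟨q, ys, γs, hfeq⟩ | ⟨p, xs, α, hDeq⟩
  · -- Case A : domf is polyhedral convex, D is generalized polyhedral convex
    obtain ⟨p, xs, α, L, _, hDeq⟩ := hD
    -- index type and functionals
    set F : (Fin p ⊕ (Fin q ⊕ Fin (m+1))) → (X →L[ℝ] ℝ) :=
      Sum.elim xs (Sum.elim ys v) with hF
    set Tlin : X →ₗ[ℝ] ((Fin p ⊕ (Fin q ⊕ Fin (m+1))) → ℝ) :=
      { toFun := fun x r => F r x
        map_add' := by intro x y; funext r; simp
        map_smul' := by intro c x; funext r; simp } with hTlin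
    obtain ⟨x₀, hx₀⟩ := hDne
    have hx₀L : x₀ ∈ L := (hDeq ▸ hx₀).1
    obtain ⟨r, e, he⟩ := SD.submodule_kernels (L.direction.map Tlin)
    set t₀ := Tlin x₀ with ht₀
    -- constraint data
    set AD : (Fin p ⊕ (Fin r ⊕ Fin r)) → ((Fin p ⊕ (Fin q ⊕ Fin (m+1))) → ℝ) :=
      Sum.elim (fun i => Pi.single (Sum.inl i) 1)
        (Sum.elim e (fun j => -(e j))) with hAD
    set bD : (Fin p ⊕ (Fin r ⊕ Fin r)) → ℝ :=
      Sum.elim α (Sum.elim (fun j => e j ⬝ᵥ t₀) (fun j => -(e j ⬝ᵥ t₀))) with hbD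
    set Af : Fin q → ((Fin p ⊕ (Fin q ⊕ Fin (m+1))) → ℝ) :=
      fun j => Pi.single (Sum.inr (Sum.inl j)) 1 with hAf
    have hmemL : ∀ x ∈ L, ∀ j, e j ⬝ᵥ (Tlin x) = e j ⬝ᵥ t₀ := by
      intro x hx j
      have hd : x - x₀ ∈ L.direction := by
        have := AffineSubspace.vsub_mem_direction hx hx₀L
        rwa [vsub_eq_sub] at this
      have hmem : Tlin x - t₀ ∈ L.direction.map Tlin := by
        rw [ht₀, ← map_sub]
        exact Submodule.mem_map_of_mem hd
      have := (he _).mp hmem j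
      rw [dotProduct_sub] at this
      linarith
    have h1 : ∀ x ∈ D, ∀ i, AD i ⬝ᵥ (fun s => F s x) ≤ bD i := by
      intro x hx i
      have hxL : x ∈ L := (hDeq ▸ hx).1
      have hxs : ∀ i, xs i x ≤ α i := (hDeq ▸ hx).2
      have hTx : (fun s => F s x) = Tlin x := rfl
      rcases i with i | (j | j)
      · rw [hAD, hbD]
        simp only [Sum.elim_inl]
        rw [single_dotProduct, one_mul]
        exact hxs i
      · rw [hAD, hbD]
        simp only [Sum.elim_inr, Sum.elim_inl]
        rw [hTx, hmemL x hxL j]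
      · rw [hAD, hbD]
        simp only [Sum.elim_inr]
        rw [hTx, neg_dotProduct, hmemL x hxL j]
    have h2 : ∀ x ∈ domf, ∀ j, Af j ⬝ᵥ (fun s => F s x) ≤ γs j := by
      intro x hx j
      rw [hAf, single_dotProduct, one_mul]
      exact (hfeq ▸ hx) j
    have h3 : ∀ t, (∀ i, AD i ⬝ᵥ t ≤ bD i) → (∀ j, Af j ⬝ᵥ t ≤ γs j) →
        ∃ x, x ∈ D ∧ x ∈ domf ∧ (fun s => F s x) = t := by
      intro t htD htf
      have hek : ∀ j, e j ⬝ᵥ (t - t₀) = 0 := by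
        intro j
        have hp := htD (Sum.inr (Sum.inl j))
        have hm := htD (Sum.inr (Sum.inr j))
        rw [hAD, hbD] at hp hm
        simp only [Sum.elim_inr, Sum.elim_inl] at hp hm
        rw [neg_dotProduct] at hm
        rw [dotProduct_sub]
        linarith
      obtain ⟨d, hd, hTd⟩ := (he (t - t₀)).mpr hek
      set x : X := d + x₀ with hxdef
      have hxL : x ∈ L := by
        have := AffineSubspace.vadd_mem_of_mem_direction hd hx₀L
        rwa [vadd_eq_add] at this
      have hTx : (fun s => F s x) = t := by
        have : Tlin x = Tlin d + Tlin x₀ := by rw [hxdef, map_add]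
        have h6 : Tlin x = t := by rw [this, hTd, ← ht₀]; abel
        exact h6
      refine ⟨x, ?_, ?_, hTx⟩
      · rw [hDeq]
        refine ⟨hxL, fun i => ?_⟩
        have := htD (Sum.inl i)
        rw [hAD, hbD] at this
        simp only [Sum.elim_inl] at this
        rw [single_dotProduct, one_mul] at this
        have hc := congrFun hTx (Sum.inl i)
        simp only [hF, Sum.elim_inl] at hc
        rw [← hc] at this
        exact this
      · rw [hfeq]
        intro j
        have := htf j
        rw [hAf, single_dotProduct, one_mul] at this
        have hc := congrFun hTx (Sum.inr (Sum.inl j))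
        simp only [hF, Sum.elim_inr, Sum.elim_inl] at hc
        rw [← hc] at this
        exact this
    exact SD.master D domf ⟨x₀, hx₀⟩ hdomne m v β f hf hf' g hg F
      (fun k => Sum.inr (Sum.inr k)) (fun k => rfl) AD bD Af γs h1 h2 h3 hsol
  · -- Case B : D is polyhedral convex, domf is generalized polyhedral convex
    obtain ⟨q, ys, γs, L, _, hfeq⟩ := hdomf
    set F : (Fin p ⊕ (Fin q ⊕ Fin (m+1))) → (X →L[ℝ] ℝ) :=
      Sum.elim xs (Sum.elim ys v) with hF
    set Tlin : X →ₗ[ℝ] ((Fin p ⊕ (Fin q ⊕ Fin (m+1))) → ℝ) :=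
      { toFun := fun x r => F r x
        map_add' := by intro x y; funext r; simp
        map_smul' := by intro c x; funext r; simp } with hTlin
    obtain ⟨x₀, hx₀⟩ := hdomne
    have hx₀L : x₀ ∈ L := (hfeq ▸ hx₀).1
    obtain ⟨r, e, he⟩ := SD.submodule_kernels (L.direction.map Tlin)
    set t₀ := Tlin x₀ with ht₀
    set AD : Fin p → ((Fin p ⊕ (Fin q ⊕ Fin (m+1))) → ℝ) :=
      fun i => Pi.single (Sum.inl i) 1 with hAD
    set Af : (Fin q ⊕ (Fin r ⊕ Fin r)) → ((Fin p ⊕ (Fin q ⊕ Fin (m+1))) → ℝ) :=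
      Sum.elim (fun j => Pi.single (Sum.inr (Sum.inl j)) 1)
        (Sum.elim e (fun j => -(e j))) with hAf
    set bf : (Fin q ⊕ (Fin r ⊕ Fin r)) → ℝ :=
      Sum.elim γs (Sum.elim (fun j => e j ⬝ᵥ t₀) (fun j => -(e j ⬝ᵥ t₀))) with hbf
    have hmemL : ∀ x ∈ L, ∀ j, e j ⬝ᵥ (Tlin x) = e j ⬝ᵥ t₀ := by
      intro x hx j
      have hd : x - x₀ ∈ L.direction := by
        have := AffineSubspace.vsub_mem_direction hx hx₀L
        rwa [vsub_eq_sub] at this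
      have hmem : Tlin x - t₀ ∈ L.direction.map Tlin := by
        rw [ht₀, ← map_sub]
        exact Submodule.mem_map_of_mem hd
      have := (he _).mp hmem j
      rw [dotProduct_sub] at this
      linarith
    have h1 : ∀ x ∈ D, ∀ i, AD i ⬝ᵥ (fun s => F s x) ≤ α i := by
      intro x hx i
      rw [hAD, single_dotProduct, one_mul]
      exact (hDeq ▸ hx) i
    have h2 : ∀ x ∈ domf, ∀ j, Af j ⬝ᵥ (fun s => F s x) ≤ bf j := by
      intro x hx j
      have hxL : x ∈ L := (hfeq ▸ hx).1
      have hys : ∀ j, ys j x ≤ γs j := (hfeq ▸ hx).2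
      have hTx : (fun s => F s x) = Tlin x := rfl
      rcases j with j | (j | j)
      · rw [hAf, hbf]
        simp only [Sum.elim_inl]
        rw [single_dotProduct, one_mul]
        exact hys j
      · rw [hAf, hbf]
        simp only [Sum.elim_inr, Sum.elim_inl]
        rw [hTx, hmemL x hxL j]
      · rw [hAf, hbf]
        simp only [Sum.elim_inr]
        rw [hTx, neg_dotProduct, hmemL x hxL j]
    have h3 : ∀ t, (∀ i, AD i ⬝ᵥ t ≤ α i) → (∀ j, Af j ⬝ᵥ t ≤ bf j) →
        ∃ x, x ∈ D ∧ x ∈ domf ∧ (fun s => F s x) = t := by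
      intro t htD htf
      have hek : ∀ j, e j ⬝ᵥ (t - t₀) = 0 := by
        intro j
        have hp := htf (Sum.inr (Sum.inl j))
        have hm := htf (Sum.inr (Sum.inr j))
        rw [hAf, hbf] at hp hm
        simp only [Sum.elim_inr, Sum.elim_inl] at hp hm
        rw [neg_dotProduct] at hm
        rw [dotProduct_sub]
        linarith
      obtain ⟨d, hd, hTd⟩ := (he (t - t₀)).mpr hek
      set x : X := d + x₀ with hxdef
      have hxL : x ∈ L := by
        have := AffineSubspace.vadd_mem_of_mem_direction hd hx₀L
        rwa [vadd_eq_add] at this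
      have hTx : (fun s => F s x) = t := by
        have : Tlin x = Tlin d + Tlin x₀ := by rw [hxdef, map_add]
        have h6 : Tlin x = t := by rw [this, hTd, ← ht₀]; abel
        exact h6
      refine ⟨x, ?_, ?_, hTx⟩
      · rw [hDeq]
        intro i
        have := htD i
        rw [hAD, single_dotProduct, one_mul] at this
        have hc := congrFun hTx (Sum.inl i)
        simp only [hF, Sum.elim_inl] at hc
        rw [← hc] at this
        exact this
      · rw [hfeq]
        refine ⟨hxL, fun j => ?_⟩
        have := htf (Sum.inl j)
        rw [hAf, hbf] at this
        simp only [Sum.elim_inl] at this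
        rw [single_dotProduct, one_mul] at this
        have hc := congrFun hTx (Sum.inr (Sum.inl j))
        simp only [hF, Sum.elim_inr, Sum.elim_inl] at hc
        rw [← hc] at this
        exact this
    exact SD.master D domf hDne ⟨x₀, hx₀⟩ m v β f hf hf' g hg F
      (fun k => Sum.inr (Sum.inr k)) (fun k => rfl) AD α Af bf h1 h2 h3 hsol
end
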